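/- arXiv:1105.0388 — 6 statements merged into one kernel-verified Lean document; each statement's English description precedes it below -/
import Mathlib

section
/- Let N ≥ 1, let α_1,…,α_N, β_1,…,β_N be complex numbers with |α_r| < 1 and 0 < |β_r| < 1 for all r, with the β_r pairwise distinct; let 0 = k_1 < k_2 < … < k_N and l_1 < l_2 < … < l_N be integers with l_N ≤ N−1, and assume h_{k_1,…,k_N}(β) ≠ 0 and h_{l_1,…,l_N}(1/β) ≠ 0. Then for all integers s_1, s_2 with 0 ≤ s_1, s_2 ≤ N and all x_1, x_2 ∈ ℕ one has the identity: −1_{s_1>s_2}·(1/2πi)∮_{|z|=1} ∏_{j=s_2+1}^{s_1} F_j(z) · z^{−(x_1−x_2+1)} dz + Σ_{j=1}^N [∏_{r=1}^N(1−α_r β_j) · ∏_{s=1,s≠j}^N(1−β_s/β_j)] / [h_{k_1,…,k_N}(β) · h_{l_1,…,l_N}(1/β)] · [(1/2πi)∮_{|z|=1} h_{k_1,…,k_N}(β; β_j↦z) ∏_{ℓ=1}^{s_1} F_ℓ(z) z^{−(x_1+1)} dz] · [(1/2πi)∮_{|z|=1} h_{l_1,…,l_N}(1/β; 1/β_j↦1/z)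 ∏_{ℓ=s_2+1}^{2N} F_ℓ(z) z^{x_2−1} dz] = −1_{s_1>s_2}·(1/2πi)∮_{|z|=1} ∏_{j=s_2+1}^{s_1}(1−α_j z)^{−1} z^{−(x_1−x_2+1)} dz + Σ_{j=1}^N (1/2πi)∮_{|z|=1} [h_{k_1,…,k_N}(β; β_j↦z)/h_{k_1,…,k_N}(β)] · ∏_{r=1}^{s_2}(1−α_r β_j) · β_j^{x_2} · ∏_{ℓ=1}^{s_1}(1−α_ℓ z)^{−1} z^{−(x_1+1)} dz. -/
open Finset Metric Real Complex



/-- The alternating determinant `h_{κ(1),…,κ(N)}(β) = det(β_j^{κ_i})_{i,j=1}^N`, where the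
sequences `κ` (integer exponents) and `β` are 1-indexed. -/
noncomputable def hdet (N : ℕ) (κ : ℕ → ℤ) (β : ℕ → ℂ) : ℂ :=
  Matrix.det (Matrix.of fun i j : Fin N => β ((j : ℕ) + 1) ^ κ ((i : ℕ) + 1))

/-- The determinant `h_{κ(1),…,κ(N)}(β; β_{j₀} ↦ z)`: the matrix `(β_j^{κ_i})` with the
`j₀`-th column replaced by `(z^{κ_i})_i`. -/
noncomputable def hdetSub (N : ℕ) (κ : ℕ → ℤ) (β : ℕ → ℂ) (j₀ : ℕ) (z : ℂ) : ℂ :=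
  Matrix.det (Matrix.of fun i j : Fin N =>
    if (j : ℕ) + 1 = j₀ then z ^ κ ((i : ℕ) + 1) else β ((j : ℕ) + 1) ^ κ ((i : ℕ) + 1))

/-- The generating functions `F_ℓ` of the transition probabilities:
`F_ℓ(z) = (1−α_ℓ z)^{−1}` for `1 ≤ ℓ ≤ N` and `F_ℓ(z) = (1−β_{2N−ℓ+1}/z)^{−1}` for
`N+1 ≤ ℓ ≤ 2N`. -/
noncomputable def Ffun (N : ℕ) (α β : ℕ → ℂ) (ℓ : ℕ) (z : ℂ) : ℂ :=
  if ℓ ≤ N then (1 - α ℓ * z)⁻¹ else (1 - β (2 * N - ℓ + 1) / z)⁻¹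

-- ### auxiliary lemmas

lemma aux_differentiable_det {n : ℕ} (f : ℂ → Matrix (Fin n) (Fin n) ℂ)
    (h : ∀ i j, Differentiable ℂ fun z => f z i j) :
    Differentiable ℂ fun z => (f z).det := by
  simp only [Matrix.det_apply']
  exact Differentiable.fun_sum fun σ _ =>
    (Differentiable.fun_finset_prod fun i _ => h _ _).const_mul _

lemma aux_partial_fractions (β : ℕ → ℂ) (S : Finset ℕ) (hS : S.Nonempty)
    (hd : ∀ i ∈ S, ∀ j ∈ S, i ≠ j → β i ≠ β j) :
    ∀ z : ℂ, (∀ r ∈ S, z ≠ β r) →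
    (∏ r ∈ S, (z - β r))⁻¹ = ∑ r ∈ S, (∏ s ∈ S.erase r, (β r - β s))⁻¹ * (z - β r)⁻¹ := by
  induction hS using Finset.Nonempty.cons_induction with
  | singleton a => simp
  | cons a s ha hs ih =>
    have hd' : ∀ i ∈ s, ∀ j ∈ s, i ≠ j → β i ≠ β j := fun i hi j hj hij =>
      hd i (mem_cons_of_mem hi) j (mem_cons_of_mem hj) hij
    intro z hz
    have hza : z ≠ β a := hz a (mem_cons_self a s)
    have hzs : ∀ r ∈ s, z ≠ β r := fun r hr => hz r (mem_cons_of_mem hr)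
    have har : ∀ r ∈ s, β a ≠ β r := fun r hr =>
      hd a (mem_cons_self a s) r (mem_cons_of_mem hr) (by rintro rfl; exact ha hr)
    have hane : ∀ r ∈ s, a ≠ r := fun r hr => by rintro rfl; exact ha hr
    rw [Finset.cons_eq_insert] at *
    have key : ∀ r ∈ s, (z - β a)⁻¹ * (z - β r)⁻¹
        = (β r - β a)⁻¹ * ((z - β r)⁻¹ - (z - β a)⁻¹) := by
      intro r hr
      have h1 : z - β a ≠ 0 := sub_ne_zero.2 hza
      have h2 : z - β r ≠ 0 := sub_ne_zero.2 (hzs r hr)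
      have h3 : β r - β a ≠ 0 := sub_ne_zero.2 ((har r hr).symm)
      field_simp
      ring
    rw [prod_insert ha, sum_insert ha, mul_inv, ih hd' z hzs, Finset.mul_sum]
    have e1 : ∀ r ∈ s, (z - β a)⁻¹ * ((∏ s' ∈ s.erase r, (β r - β s'))⁻¹ * (z - β r)⁻¹)
        = (∏ s' ∈ (insert a s).erase r, (β r - β s'))⁻¹ * (z - β r)⁻¹
          - ((∏ s' ∈ s.erase r, (β r - β s'))⁻¹ * (β r - β a)⁻¹) * (z - β a)⁻¹ := by
      intro r hr
      have hras : (insert a s).erase r = insert a (s.erase r) :=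
        Finset.erase_insert_of_ne (hane r hr)
      rw [hras, prod_insert (fun h => ha (Finset.mem_of_mem_erase h)), mul_inv]
      calc (z - β a)⁻¹ * ((∏ s' ∈ s.erase r, (β r - β s'))⁻¹ * (z - β r)⁻¹)
          = (∏ s' ∈ s.erase r, (β r - β s'))⁻¹ * ((z - β a)⁻¹ * (z - β r)⁻¹) := by ring
        _ = (∏ s' ∈ s.erase r, (β r - β s'))⁻¹ *
            ((β r - β a)⁻¹ * ((z - β r)⁻¹ - (z - β a)⁻¹)) := by rw [key r hr]
        _ = _ := by ring
    rw [Finset.sum_congr rfl e1, Finset.sum_sub_distrib, ← Finset.sum_mul]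
    have e2 : ∑ r ∈ s, (∏ s' ∈ s.erase r, (β r - β s'))⁻¹ * (β r - β a)⁻¹
        = -(∏ s' ∈ (insert a s).erase a, (β a - β s'))⁻¹ := by
      rw [Finset.erase_insert ha, ih hd' (β a) har, ← Finset.sum_neg_distrib]
      refine Finset.sum_congr rfl fun r hr => ?_
      have h4 : (β r - β a)⁻¹ = -(β a - β r)⁻¹ := by rw [← inv_neg, neg_sub]
      rw [h4]; ring
    rw [e2]
    ring

lemma aux_circleIntegral_sum {S : Finset ℕ} (f : ℕ → ℂ → ℂ)
    (hf : ∀ r ∈ S, CircleIntegrable (f r) 0 1) :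
    (∮ z in C(0,1), ∑ r ∈ S, f r z) = ∑ r ∈ S, ∮ z in C(0,1), f r z := by
  simp only [circleIntegral]
  rw [← intervalIntegral.integral_finset_sum (fun r hr => (hf r hr).out)]
  congr 1; funext θ; rw [Finset.smul_sum]

lemma aux_residues (g : ℂ → ℂ) (hg : DiffContOnCl ℂ g (ball (0:ℂ) 1)) {S : Finset ℕ}
    (w : ℕ → ℂ) (hw : ∀ r ∈ S, ‖w r‖ < 1) (c : ℕ → ℂ) :
    (∮ z in C(0,1), ∑ r ∈ S, c r * ((z - w r)⁻¹ * g z))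
      = (2 * π * I) * ∑ r ∈ S, c r * g (w r) := by
  have hcl : closure (ball (0:ℂ) 1) = closedBall (0:ℂ) 1 := closure_ball 0 one_ne_zero
  have hcont : ContinuousOn g (sphere (0:ℂ) 1) :=
    (hcl ▸ hg.continuousOn).mono sphere_subset_closedBall
  have hne : ∀ r ∈ S, ∀ z ∈ sphere (0:ℂ) 1, z - w r ≠ 0 := by
    intro r hr z hz
    rw [mem_sphere_zero_iff_norm] at hz
    refine sub_ne_zero.2 fun h => ?_
    have h2 := hw r hr
    rw [← h, hz] at h2
    exact lt_irrefl 1 h2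
  have hint : ∀ r ∈ S, CircleIntegrable (fun z => c r * ((z - w r)⁻¹ * g z)) 0 1 := by
    intro r hr
    refine ContinuousOn.circleIntegrable zero_le_one ?_
    exact continuousOn_const.mul
      (((continuousOn_id.sub continuousOn_const).inv₀ (hne r hr)).mul hcont)
  rw [aux_circleIntegral_sum _ hint, Finset.mul_sum]
  refine Finset.sum_congr rfl fun r hr => ?_
  have hball : w r ∈ ball (0:ℂ) 1 := by
    rw [mem_ball_zero_iff]; exact hw r hr
  have step1 : (∮ z in C(0, 1), c r * ((z - w r)⁻¹ * g z))
      = c r • ∮ z in C(0, 1), (z - w r)⁻¹ • g z := by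
    rw [← circleIntegral.integral_smul]
    congr 1
  rw [step1, hg.circleIntegral_sub_inv_smul hball, smul_eq_mul, smul_eq_mul]
  ring

lemma aux_hdetSub_eq (N : ℕ) (κ : ℕ → ℤ) (β : ℕ → ℂ) (j : ℕ) (h1 : 1 ≤ j) (h2 : j ≤ N)
    (z : ℂ) :
    hdetSub N κ β j z = Matrix.det
      ((Matrix.of fun i c : Fin N => β ((c : ℕ) + 1) ^ κ ((i : ℕ) + 1)).updateCol
        ⟨j - 1, by omega⟩ (fun i => z ^ κ ((i : ℕ) + 1))) := by
  unfold hdetSub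
  congr 1
  apply Matrix.ext
  intro i c
  rw [Matrix.updateCol_apply]
  by_cases h : c = (⟨j - 1, by omega⟩ : Fin N)
  · have : (c : ℕ) + 1 = j := by
      rw [h]; simp; omega
    have hj : j - 1 + 1 = j := by omega
    simp [Matrix.of_apply, h, this, hj]
  · have : ¬((c : ℕ) + 1 = j) := by
      intro hc; apply h; apply Fin.ext; simp; omega
    simp [Matrix.of_apply, h, this]

noncomputable def Qdet (N : ℕ) (lam : ℕ → ℤ) (β : ℕ → ℂ) (j0 : Fin N) (z : ℂ) : ℂ :=
  Matrix.det ((Matrix.of fun i c : Fin N =>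
      ((β ((c : ℕ) + 1))⁻¹) ^ lam ((i : ℕ) + 1)).updateCol
    j0 (fun i => z ^ ((N : ℤ) - 1 - lam ((i : ℕ) + 1)).toNat))

lemma Qdet_diff (N : ℕ) (lam : ℕ → ℤ) (β : ℕ → ℂ) (j0 : Fin N) :
    Differentiable ℂ (Qdet N lam β j0) := by
  apply aux_differentiable_det
  intro i c
  simp only [Matrix.updateCol_apply]
  by_cases h : c = j0 <;> simp [h]

lemma aux_pow_toNat (z : ℂ) (hz : z ≠ 0) (N : ℕ) (m : ℤ) (hm : m ≤ (N : ℤ) - 1) :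
    z ^ ((N : ℤ) - 1 - m).toNat = z ^ ((N : ℤ) - 1) * (z⁻¹) ^ m := by
  rw [← zpow_natCast, Int.toNat_of_nonneg (by omega), zpow_sub₀ hz, div_eq_mul_inv, inv_zpow]

lemma Qdet_eq_hdetSub (N : ℕ) (lam : ℕ → ℤ) (β : ℕ → ℂ) (j0 : Fin N)
    (hlam_le : ∀ i, 1 ≤ i → i ≤ N → lam i ≤ (N : ℤ) - 1) (z : ℂ) (hz : z ≠ 0) :
    Qdet N lam β j0 z
      = z ^ ((N : ℤ) - 1) * hdetSub N lam (fun i => (β i)⁻¹) ((j0 : ℕ) + 1) z⁻¹ := by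
  rw [aux_hdetSub_eq N lam (fun i => (β i)⁻¹) ((j0 : ℕ) + 1) (by omega) (by omega)]
  have hfin : (⟨(j0 : ℕ) + 1 - 1, by omega⟩ : Fin N) = j0 := by
    apply Fin.ext; simp
  rw [hfin]
  unfold Qdet
  have hcol : (fun i : Fin N => z ^ ((N : ℤ) - 1 - lam ((i : ℕ) + 1)).toNat)
      = (z ^ ((N : ℤ) - 1)) • (fun i : Fin N => (z⁻¹) ^ lam ((i : ℕ) + 1)) := by
    funext i
    rw [Pi.smul_apply, smul_eq_mul, aux_pow_toNat z hz N _ (hlam_le _ (by omega) (by omega))]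
  rw [hcol, Matrix.det_updateCol_smul]

lemma Qdet_root (N : ℕ) (lam : ℕ → ℤ) (β : ℕ → ℂ) (j0 r0 : Fin N)
    (hlam_le : ∀ i, 1 ≤ i → i ≤ N → lam i ≤ (N : ℤ) - 1)
    (hne : r0 ≠ j0) (hb : β ((r0 : ℕ) + 1) ≠ 0) :
    Qdet N lam β j0 (β ((r0 : ℕ) + 1)) = 0 := by
  unfold Qdet
  have hcol : (fun i : Fin N => (β ((r0 : ℕ) + 1)) ^ ((N : ℤ) - 1 - lam ((i : ℕ) + 1)).toNat)
      = ((β ((r0 : ℕ) + 1)) ^ ((N : ℤ) - 1)) • (fun i : Fin N =>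
          (Matrix.of fun i c : Fin N => ((β ((c : ℕ) + 1))⁻¹) ^ lam ((i : ℕ) + 1)) i r0) := by
    funext i
    rw [Pi.smul_apply, smul_eq_mul, aux_pow_toNat _ hb N _ (hlam_le _ (by omega) (by omega))]
    simp [Matrix.of_apply]
  rw [hcol, Matrix.det_updateCol_smul, Matrix.det_updateCol_eq_zero hne, mul_zero]

lemma Qdet_self (N : ℕ) (lam : ℕ → ℤ) (β : ℕ → ℂ) (j0 : Fin N)
    (hlam_le : ∀ i, 1 ≤ i → i ≤ N → lam i ≤ (N : ℤ) - 1)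
    (hb : β ((j0 : ℕ) + 1) ≠ 0) :
    Qdet N lam β j0 (β ((j0 : ℕ) + 1))
      = (β ((j0 : ℕ) + 1)) ^ ((N : ℤ) - 1) * hdet N lam (fun i => (β i)⁻¹) := by
  unfold Qdet
  have hcol : (fun i : Fin N => (β ((j0 : ℕ) + 1)) ^ ((N : ℤ) - 1 - lam ((i : ℕ) + 1)).toNat)
      = ((β ((j0 : ℕ) + 1)) ^ ((N : ℤ) - 1)) • (fun i : Fin N =>
          (Matrix.of fun i c : Fin N => ((β ((c : ℕ) + 1))⁻¹) ^ lam ((i : ℕ) + 1)) i j0) := by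
    funext i
    rw [Pi.smul_apply, smul_eq_mul, aux_pow_toNat _ hb N _ (hlam_le _ (by omega) (by omega))]
    simp [Matrix.of_apply]
  rw [hcol, Matrix.det_updateCol_smul, Matrix.updateCol_eq_self]
  rfl

lemma aux_lam_le (N : ℕ) (hN : 1 ≤ N) (lam : ℕ → ℤ)
    (hlam : ∀ i j, 1 ≤ i → i < j → j ≤ N → lam i < lam j) (hlamN : lam N ≤ (N : ℤ) - 1) :
    ∀ i, 1 ≤ i → i ≤ N → lam i ≤ (N : ℤ) - 1 := by
  have key : ∀ d i, 1 ≤ i → i + d ≤ N → lam i + d ≤ lam (i + d) := by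
    intro d
    induction d with
    | zero => intro i _ _; simp
    | succ n ih =>
      intro i h1 h2
      have ha := ih i h1 (by omega)
      have hb : lam (i + n) < lam (i + n + 1) := hlam _ _ (by omega) (by omega) (by omega)
      have hc : i + (n + 1) = i + n + 1 := by omega
      rw [hc]; push_cast; omega
  intro i h1 h2
  have h3 := key (N - i) i h1 (by omega)
  have heq : i + (N - i) = N := by omega
  rw [heq] at h3
  have hc : ((N - i : ℕ) : ℤ) = (N : ℤ) - i := by omega
  omega

lemma aux_alg (P1 P2 P3 a hk hl bx : ℂ) (h2 : P2 ≠ 0) (h3 : P3 ≠ 0) (ha : a ≠ 0)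
    (hk0 : hk ≠ 0) (hl0 : hl ≠ 0) :
    (P1 * P2 * (P3 * a⁻¹)) / (hk * hl) * (P3⁻¹ * (bx * (a * hl) * P2⁻¹)) = P1 * bx / hk := by
  field_simp

lemma aux_one_sub_ne (w : ℂ) (h : ‖w‖ < 1) : (1 : ℂ) - w ≠ 0 := by
  intro hc
  have hw : w = 1 := by linear_combination -hc
  rw [hw] at h; simp at h

/-- Theorem 1 of the paper, the identity between the Eynard–Mehta form (2.14)
of the kernel (with diagonalized Gramm matrix) and its simplified form (2.15) valid for
`s₁, s₂ ≤ N`.  All circle integrals are over the positively oriented unit circle. -/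
theorem general_formula (N : ℕ) (hN : 1 ≤ N) (α β : ℕ → ℂ)
    (hα : ∀ i, 1 ≤ i → i ≤ N → ‖α i‖ < 1)
    (hβ : ∀ i, 1 ≤ i → i ≤ N → 0 < ‖β i‖ ∧ ‖β i‖ < 1)
    (hdist : ∀ i j, 1 ≤ i → i ≤ N → 1 ≤ j → j ≤ N → i ≠ j → β i ≠ β j)
    (κ lam : ℕ → ℤ) (hκ0 : κ 1 = 0)
    (hκ : ∀ i j, 1 ≤ i → i < j → j ≤ N → κ i < κ j)
    (hlam : ∀ i j, 1 ≤ i → i < j → j ≤ N → lam i < lam j)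
    (hlamN : lam N ≤ (N : ℤ) - 1)
    (hhk : hdet N κ β ≠ 0) (hhl : hdet N lam (fun i => (β i)⁻¹) ≠ 0)
    (s₁ s₂ : ℕ) (hs₁ : s₁ ≤ N) (hs₂ : s₂ ≤ N) (x₁ x₂ : ℕ) :
    -(if s₂ < s₁ then (1 : ℂ) else 0) * (1 / (2 * (Real.pi : ℂ) * Complex.I)) *
        (∮ z in C(0, 1),
          (∏ j ∈ Finset.Icc (s₂ + 1) s₁, Ffun N α β j z) * z ^ (-((x₁ : ℤ) - x₂ + 1)))
      + ∑ j ∈ Finset.Icc 1 N,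
          ((∏ i ∈ Finset.Icc 1 N, (1 - α i * β j)) *
              ∏ s ∈ (Finset.Icc 1 N).erase j, (1 - β s / β j)) /
              (hdet N κ β * hdet N lam (fun i => (β i)⁻¹)) *
            ((1 / (2 * (Real.pi : ℂ) * Complex.I)) *
              ∮ z in C(0, 1),
                hdetSub N κ β j z * (∏ l ∈ Finset.Icc 1 s₁, Ffun N α β l z) *
                  z ^ (-((x₁ : ℤ) + 1))) *
            ((1 / (2 * (Real.pi : ℂ) * Complex.I)) *
              ∮ z in C(0, 1),
                hdetSub N lam (fun i => (β i)⁻¹) j z⁻¹ *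
                  (∏ l ∈ Finset.Icc (s₂ + 1) (2 * N), Ffun N α β l z) *
                  z ^ ((x₂ : ℤ) - 1))
    = -(if s₂ < s₁ then (1 : ℂ) else 0) * (1 / (2 * (Real.pi : ℂ) * Complex.I)) *
          (∮ z in C(0, 1),
            (∏ j ∈ Finset.Icc (s₂ + 1) s₁, (1 - α j * z)⁻¹) * z ^ (-((x₁ : ℤ) - x₂ + 1)))
      + ∑ j ∈ Finset.Icc 1 N,
          (1 / (2 * (Real.pi : ℂ) * Complex.I)) *
            ∮ z in C(0, 1),
              (hdetSub N κ β j z / hdet N κ β) *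
                (∏ i ∈ Finset.Icc 1 s₂, (1 - α i * β j)) * β j ^ x₂ *
                (∏ l ∈ Finset.Icc 1 s₁, (1 - α l * z)⁻¹) * z ^ (-((x₁ : ℤ) + 1)) := by
  classical
  have h2pi : (2 * (π : ℂ) * I) ≠ 0 :=
    mul_ne_zero (mul_ne_zero two_ne_zero (by exact_mod_cast Real.pi_ne_zero)) I_ne_zero
  have hβne : ∀ r ∈ Finset.Icc 1 N, β r ≠ 0 := by
    intro r hr
    rw [Finset.mem_Icc] at hr
    intro h
    have := (hβ r hr.1 hr.2).1
    rw [h] at this; simp at this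
  have hβlt : ∀ r ∈ Finset.Icc 1 N, ‖β r‖ < 1 := by
    intro r hr; rw [Finset.mem_Icc] at hr; exact (hβ r hr.1 hr.2).2
  have hlam_le := aux_lam_le N hN lam hlam hlamN
  -- first terms are equal
  have hfirst : (∮ z in C(0, 1),
        (∏ j ∈ Finset.Icc (s₂ + 1) s₁, Ffun N α β j z) * z ^ (-((x₁ : ℤ) - x₂ + 1)))
      = ∮ z in C(0, 1),
        (∏ j ∈ Finset.Icc (s₂ + 1) s₁, (1 - α j * z)⁻¹) * z ^ (-((x₁ : ℤ) - x₂ + 1)) := by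
    congr 1; funext z
    congr 1
    refine Finset.prod_congr rfl fun l hl => ?_
    rw [Finset.mem_Icc] at hl
    unfold Ffun
    rw [if_pos (by omega)]
  rw [hfirst]
  congr 1
  refine Finset.sum_congr rfl fun j hj => ?_
  rw [Finset.mem_Icc] at hj
  have hj1 : 1 ≤ j := hj.1
  have hj2 : j ≤ N := hj.2
  have hjT : j ∈ Finset.Icc 1 N := Finset.mem_Icc.2 hj
  set j0 : Fin N := ⟨j - 1, by omega⟩ with hj0def
  have hj0v : (j0 : ℕ) + 1 = j := by simp [hj0def]; omega
  have hb0 : β j ≠ 0 := hβne j hjT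
  set c : ℕ → ℂ := fun r => (∏ s ∈ (Finset.Icc 1 N).erase r, (β r - β s))⁻¹ with hcdef
  set g : ℂ → ℂ := fun z => z ^ x₂ * Qdet N lam β j0 z *
    ∏ l ∈ Finset.Ioc s₂ N, (1 - α l * z)⁻¹ with hgdef
  have hgdc : DiffContOnCl ℂ g (ball (0:ℂ) 1) := by
    apply DifferentiableOn.diffContOnCl
    rw [closure_ball (0:ℂ) one_ne_zero]
    apply DifferentiableOn.mul
    · exact (((differentiable_pow x₂).mul (Qdet_diff N lam β j0)).differentiableOn)
    · apply DifferentiableOn.fun_finset_prod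
      intro l hl
      rw [Finset.mem_Ioc] at hl
      apply DifferentiableOn.inv
      · exact ((differentiable_const _).sub ((differentiable_const _).mul
          differentiable_id)).differentiableOn
      · intro z hz
        rw [mem_closedBall_zero_iff] at hz
        apply aux_one_sub_ne
        rw [norm_mul]
        calc ‖α l‖ * ‖z‖ ≤ ‖α l‖ * 1 := by
              apply mul_le_mul_of_nonneg_left _ (norm_nonneg _)
              exact hz
          _ < 1 := by rw [mul_one]; exact hα l (by omega) hl.2
  -- the key residue computation
  have hI2 : (∮ z in C(0, 1),
        hdetSub N lam (fun i => (β i)⁻¹) j z⁻¹ *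
          (∏ l ∈ Finset.Icc (s₂ + 1) (2 * N), Ffun N α β l z) * z ^ ((x₂ : ℤ) - 1))
      = (2 * π * I) * (c j * g (β j)) := by
    have heq : Set.EqOn (fun z => hdetSub N lam (fun i => (β i)⁻¹) j z⁻¹ *
        (∏ l ∈ Finset.Icc (s₂ + 1) (2 * N), Ffun N α β l z) * z ^ ((x₂ : ℤ) - 1))
        (fun z => ∑ r ∈ Finset.Icc 1 N, c r * ((z - β r)⁻¹ * g z)) (sphere (0:ℂ) 1) := by
      intro z hz
      rw [mem_sphere_zero_iff_norm] at hz
      have hz0 : z ≠ 0 := by intro h; rw [h] at hz; simp at hz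
      have hzb : ∀ r ∈ Finset.Icc 1 N, z ≠ β r := by
        intro r hr h
        have hlt := hβlt r hr
        rw [← h, hz] at hlt
        exact lt_irrefl 1 hlt
      simp only
      have hdet_eq : hdetSub N lam (fun i => (β i)⁻¹) j z⁻¹
          = Qdet N lam β j0 z * (z ^ ((N : ℤ) - 1))⁻¹ := by
        rw [Qdet_eq_hdetSub N lam β j0 hlam_le z hz0, hj0v]
        rw [mul_comm (z ^ ((N : ℤ) - 1)), mul_assoc, mul_inv_cancel₀ (zpow_ne_zero _ hz0),
          mul_one]
      have hFsplit : (∏ l ∈ Finset.Icc (s₂ + 1) (2 * N), Ffun N α β l z)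
          = (∏ l ∈ Finset.Ioc s₂ N, (1 - α l * z)⁻¹) *
            (z ^ N * (∏ r ∈ Finset.Icc 1 N, (z - β r))⁻¹) := by
        rw [show Finset.Icc (s₂ + 1) (2 * N) = Finset.Ioc s₂ (2 * N) from
          Finset.Icc_add_one_left_eq_Ioc s₂ (2 * N)]
        rw [← Finset.prod_Ioc_consecutive _ hs₂ (by omega : N ≤ 2 * N)]
        congr 1
        · refine Finset.prod_congr rfl fun l hl => ?_
          rw [Finset.mem_Ioc] at hl
          unfold Ffun; rw [if_pos hl.2]
        · have h1 : ∏ l ∈ Finset.Ioc N (2 * N), Ffun N α β l z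
              = ∏ r ∈ Finset.Icc 1 N, (1 - β r / z)⁻¹ := by
            refine Finset.prod_nbij' (fun l => 2 * N + 1 - l) (fun r => 2 * N + 1 - r)
              ?_ ?_ ?_ ?_ ?_
            · intro a ha; rw [Finset.mem_Ioc] at ha; rw [Finset.mem_Icc]; omega
            · intro a ha; rw [Finset.mem_Icc] at ha; rw [Finset.mem_Ioc]; omega
            · intro a ha; rw [Finset.mem_Ioc] at ha; omega
            · intro a ha; rw [Finset.mem_Icc] at ha; omega
            · intro a ha; rw [Finset.mem_Ioc] at ha
              unfold Ffun
              rw [if_neg (by omega)]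
              have harg : 2 * N - a + 1 = 2 * N + 1 - a := by omega
              rw [harg]
          rw [h1]
          have h2 : ∀ r ∈ Finset.Icc 1 N, (1 - β r / z)⁻¹ = z * (z - β r)⁻¹ := by
            intro r hr
            have e : 1 - β r / z = (z - β r) / z := by field_simp
            rw [e, inv_div, div_eq_mul_inv]
          rw [Finset.prod_congr rfl h2, Finset.prod_mul_distrib, Finset.prod_const,
            Finset.prod_inv_distrib, Nat.card_Icc]
          norm_num
      rw [hdet_eq, hFsplit,
        aux_partial_fractions β (Finset.Icc 1 N) ⟨1, Finset.mem_Icc.2 ⟨le_refl 1, hN⟩⟩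
          (fun i hi k hk hik => by
            rw [Finset.mem_Icc] at hi hk
            exact hdist i k hi.1 hi.2 hk.1 hk.2 hik) z hzb]
      have hpow : (z ^ ((N : ℤ) - 1))⁻¹ * z ^ N * z ^ ((x₂ : ℤ) - 1) = z ^ x₂ := by
        rw [← zpow_natCast z N, ← zpow_natCast z x₂, ← zpow_neg, ← zpow_add₀ hz0,
          ← zpow_add₀ hz0]
        congr 1; push_cast; ring
      simp only [Finset.mul_sum, Finset.sum_mul]
      refine Finset.sum_congr rfl fun r hr => ?_
      simp only [hgdef, hcdef]
      rw [← hpow]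
      ring
    rw [circleIntegral.integral_congr zero_le_one heq, aux_residues g hgdc β hβlt c]
    congr 1
    refine Finset.sum_eq_single_of_mem j hjT fun r hr hrj => ?_
    rw [Finset.mem_Icc] at hr
    have hgr : g (β r) = 0 := by
      have hr0v : ((⟨r - 1, by omega⟩ : Fin N) : ℕ) + 1 = r := by simp; omega
      have hroot := Qdet_root N lam β j0 ⟨r - 1, by omega⟩ hlam_le
        (by
          intro hh; apply hrj
          have hv := congrArg Fin.val hh
          simp [hj0def] at hv
          omega)
        (by rw [hr0v]; exact hβne r (Finset.mem_Icc.2 hr))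
      rw [hr0v] at hroot
      simp only [hgdef]
      rw [hroot, mul_zero, zero_mul]
    rw [hgr, mul_zero]
  rw [hI2]
  have hcollapse : (1 / (2 * (π : ℂ) * I)) * ((2 * π * I) * (c j * g (β j)))
      = c j * g (β j) := by
    field_simp
  rw [hcollapse]
  -- algebra: the weight times the residue value
  set D : ℂ := (∏ i ∈ Finset.Icc 1 s₂, (1 - α i * β j)) * β j ^ x₂ / hdet N κ β with hDdef
  have hQself : Qdet N lam β j0 (β j) = (β j) ^ ((N : ℤ) - 1) * hdet N lam (fun i => (β i)⁻¹) := by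
    have h := Qdet_self N lam β j0 hlam_le (by rw [hj0v]; exact hb0)
    rwa [hj0v] at h
  have hP2ne : (∏ l ∈ Finset.Ioc s₂ N, (1 - α l * β j)) ≠ 0 := by
    rw [Finset.prod_ne_zero_iff]
    intro l hl
    rw [Finset.mem_Ioc] at hl
    apply aux_one_sub_ne
    rw [norm_mul]
    calc ‖α l‖ * ‖β j‖
        ≤ ‖α l‖ * 1 := by
          apply mul_le_mul_of_nonneg_left (le_of_lt (hβlt j hjT)) (norm_nonneg _)
      _ < 1 := by rw [mul_one]; exact hα l (by omega) hl.2
  have hP3ne : (∏ s ∈ (Finset.Icc 1 N).erase j, (β j - β s)) ≠ 0 := by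
    rw [Finset.prod_ne_zero_iff]
    intro s hs
    have hsj : s ≠ j := Finset.ne_of_mem_erase hs
    have hsT := Finset.mem_of_mem_erase hs
    rw [Finset.mem_Icc] at hsT
    exact sub_ne_zero.2 (hdist j s hj1 hj2 hsT.1 hsT.2 (Ne.symm hsj))
  have hW : ((∏ i ∈ Finset.Icc 1 N, (1 - α i * β j)) *
        ∏ s ∈ (Finset.Icc 1 N).erase j, (1 - β s / β j)) /
        (hdet N κ β * hdet N lam (fun i => (β i)⁻¹)) * (c j * g (β j)) = D := by
    have hsplitN : (∏ i ∈ Finset.Icc 1 N, (1 - α i * β j))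
        = (∏ i ∈ Finset.Icc 1 s₂, (1 - α i * β j)) *
          ∏ l ∈ Finset.Ioc s₂ N, (1 - α l * β j) := by
      rw [show Finset.Icc 1 N = Finset.Ioc 0 N from Finset.Icc_add_one_left_eq_Ioc 0 N,
        show Finset.Icc 1 s₂ = Finset.Ioc 0 s₂ from Finset.Icc_add_one_left_eq_Ioc 0 s₂,
        Finset.prod_Ioc_consecutive _ (Nat.zero_le s₂) hs₂]
    have hcard : ((Finset.Icc 1 N).erase j).card = N - 1 := by
      rw [Finset.card_erase_of_mem hjT, Nat.card_Icc]; omega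
    have hPe : (∏ s ∈ (Finset.Icc 1 N).erase j, (1 - β s / β j))
        = (∏ s ∈ (Finset.Icc 1 N).erase j, (β j - β s)) * ((β j) ^ (N - 1))⁻¹ := by
      have h2 : ∀ s ∈ (Finset.Icc 1 N).erase j, (1 - β s / β j) = (β j - β s) * (β j)⁻¹ := by
        intro s hs; field_simp
      rw [Finset.prod_congr rfl h2, Finset.prod_mul_distrib, Finset.prod_const, hcard, inv_pow]
    have hzpow : (β j) ^ ((N : ℤ) - 1) = (β j) ^ (N - 1) := by
      rw [← zpow_natCast]
      congr 1
      omega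
    have hPinv : (∏ l ∈ Finset.Ioc s₂ N, (1 - α l * β j)⁻¹)
        = (∏ l ∈ Finset.Ioc s₂ N, (1 - α l * β j))⁻¹ := Finset.prod_inv_distrib _
    simp only [hgdef, hcdef, hDdef]
    rw [hQself, hsplitN, hPe, hzpow, hPinv]
    have hbpow : (β j : ℂ) ^ (N - 1) ≠ 0 := pow_ne_zero _ hb0
    exact aux_alg _ _ _ _ _ _ _ hP2ne hP3ne hbpow hhk hhl
  -- final rearrangement
  have hRHS : (∮ z in C(0, 1),
        (hdetSub N κ β j z / hdet N κ β) * (∏ i ∈ Finset.Icc 1 s₂, (1 - α i * β j)) *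
          β j ^ x₂ * (∏ l ∈ Finset.Icc 1 s₁, (1 - α l * z)⁻¹) * z ^ (-((x₁ : ℤ) + 1)))
      = D * ∮ z in C(0, 1), hdetSub N κ β j z *
          (∏ l ∈ Finset.Icc 1 s₁, Ffun N α β l z) * z ^ (-((x₁ : ℤ) + 1)) := by
    have hsm := circleIntegral.integral_smul (𝕜 := ℂ) D
      (fun z => hdetSub N κ β j z * (∏ l ∈ Finset.Icc 1 s₁, Ffun N α β l z) *
        z ^ (-((x₁ : ℤ) + 1))) 0 1
    simp only [smul_eq_mul] at hsm
    rw [← hsm]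
    congr 1; funext z
    have hFf : (∏ l ∈ Finset.Icc 1 s₁, Ffun N α β l z)
        = ∏ l ∈ Finset.Icc 1 s₁, (1 - α l * z)⁻¹ := by
      refine Finset.prod_congr rfl fun l hl => ?_
      rw [Finset.mem_Icc] at hl
      unfold Ffun; rw [if_pos (by omega)]
    rw [hFf, hDdef]
    ring
  rw [hRHS, ← hW]
  ring
end

section
/- Let N, k ≥ 1 be integers, let α_1,…,α_N ∈ ℂ with |α_ℓ| < 1, and let β_1,…,β_N be nonzero complex numbers with 0 < |β_j| < 1 whose k-th powers β_1^k,…,β_N^k are pairwise distinct. Set k_j = k(j−1) for j = 1,…,N. For each j choose ε_j > 0 such that the closed disk {|w−β_j| ≤ ε_j} is contained in the open unit disk and contains no point ω_k^m β_t with (m,t) ≠ (0,j) (0 ≤ m ≤ k−1, 1 ≤ t ≤ N) and does not contain 0, where ω_k = e^{2πi/k}. Then for all integers s_1, s_2 with 0 ≤ s_1, s_2 ≤ N and all x_1, x_2 ∈ ℕ: Σ_{j=1}^N (1/2πi)∮_{|z|=1} [h_{0,k,2k,…,(N−1)k}(β; β_j↦z)/h_{0,k,2k,…,(N−1)k}(β)]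 · ∏_{r=1}^{s_2}(1−α_r β_j) · β_j^{x_2} · ∏_{ℓ=1}^{s_1}(1−α_ℓ z)^{−1} z^{−(x_1+1)} dz = (k/(2πi)^2) ∮_{|z|=1} Σ_{j=1}^N ∮_{|w−β_j|=ε_j} [∏_{r=1}^{s_2}(1−α_r w) · ∏_{t=1}^N(z^k−β_t^k)] / [∏_{ℓ=1}^{s_1}(1−α_ℓ z) · ∏_{t=1}^N(w^k−β_t^k)] · w^{x_2+k−1} z^{−(x_1+1)} (z^k−w^k)^{−1} dw dz. -/
/-- The alternating determinant `h_{κ(1),…,κ(N)}(β) = det(β_j^{κ_i})_{i,j=1}^N`, with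
natural-number exponents; the sequences `κ` and `β` are 1-indexed. -/
noncomputable def hdetN (N : ℕ) (κ : ℕ → ℕ) (β : ℕ → ℂ) : ℂ :=
  Matrix.det (Matrix.of fun i j : Fin N => β ((j : ℕ) + 1) ^ κ ((i : ℕ) + 1))

/-- The determinant `h_{κ(1),…,κ(N)}(β; β_{j₀} ↦ z)`: the matrix `(β_j^{κ_i})` with the
`j₀`-th column replaced by `(z^{κ_i})_i`, with natural-number exponents. -/
noncomputable def hdetSubN (N : ℕ) (κ : ℕ → ℕ) (β : ℕ → ℂ) (j₀ : ℕ) (z : ℂ) : ℂ :=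
  Matrix.det (Matrix.of fun i j : Fin N =>
    if (j : ℕ) + 1 = j₀ then z ^ κ ((i : ℕ) + 1) else β ((j : ℕ) + 1) ^ κ ((i : ℕ) + 1))

/-- The primitive `k`-th root of unity `ω_k = e^{2πi/k}`. -/
noncomputable def omegaK (k : ℕ) : ℂ := Complex.exp (2 * Real.pi * Complex.I / k)


section Helpers

open Finset Metric

lemma prod_pairs_erase {N : ℕ} (p : Fin N) (f : Fin N → ℂ) :
    (∏ i : Fin N, ∏ j ∈ Finset.Ioi i, (if i = p then f j else if j = p then f i else 1))
      = ∏ t ∈ Finset.univ.erase p, f t := by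
  rw [← Finset.mul_prod_erase Finset.univ _ (Finset.mem_univ p)]
  have h1 : (∏ j ∈ Finset.Ioi p, (if p = p then f j else if j = p then f p else 1))
      = ∏ j ∈ Finset.Ioi p, f j := Finset.prod_congr rfl fun j _ => by simp
  have h2 : ∀ i : Fin N, i ≠ p →
      (∏ j ∈ Finset.Ioi i, (if i = p then f j else if j = p then f i else 1))
        = if i < p then f i else 1 := by
    intro i hi
    have : (∏ j ∈ Finset.Ioi i, (if i = p then f j else if j = p then f i else 1))
        = ∏ j ∈ Finset.Ioi i, (if j = p then f i else 1) :=
      Finset.prod_congr rfl fun j _ => by simp [hi]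
    rw [this, Finset.prod_ite_eq' (Finset.Ioi i) p (fun _ => f i)]
    simp [Finset.mem_Ioi]
  have h3 : (∏ i ∈ Finset.univ.erase p,
      (∏ j ∈ Finset.Ioi i, (if i = p then f j else if j = p then f i else 1)))
      = ∏ i ∈ Finset.univ.erase p, (if i < p then f i else 1) :=
    Finset.prod_congr rfl fun i hi => h2 i (Finset.mem_erase.1 hi).1
  rw [h1, h3, ← Finset.prod_filter]
  have h4 : (Finset.univ.erase p).filter (· < p) = Finset.Iio p := by
    ext t; simp only [Finset.mem_filter, Finset.mem_erase, Finset.mem_univ, Finset.mem_Iio,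
      true_and, and_true]
    exact ⟨fun h => h.2, fun h => ⟨ne_of_lt h, h⟩⟩
  have h5 : Finset.univ.erase p = Finset.Ioi p ∪ Finset.Iio p := by
    ext t; simp only [Finset.mem_erase, Finset.mem_univ, and_true, Finset.mem_union,
      Finset.mem_Ioi, Finset.mem_Iio]
    constructor
    · intro h; rcases lt_or_gt_of_ne h with h' | h'
      · exact Or.inr h'
      · exact Or.inl h'
    · rintro (h | h)
      · exact ne_of_gt h
      · exact ne_of_lt h
  rw [h4, h5, Finset.prod_union]
  exact Finset.disjoint_left.2 fun a ha hb => absurd (Finset.mem_Iio.1 hb)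
    (not_lt.2 (le_of_lt (Finset.mem_Ioi.1 ha)))

lemma vand_update {N : ℕ} (v : Fin N → ℂ) (p : Fin N) (c : ℂ) :
    (∏ i : Fin N, ∏ j ∈ Finset.Ioi i,
        (Function.update v p c j - Function.update v p c i)) *
      ∏ t ∈ Finset.univ.erase p, (v p - v t)
    = (∏ i : Fin N, ∏ j ∈ Finset.Ioi i, (v j - v i)) *
      ∏ t ∈ Finset.univ.erase p, (c - v t) := by
  rw [← prod_pairs_erase p (fun t => v p - v t), ← prod_pairs_erase p (fun t => c - v t),
    ← Finset.prod_mul_distrib, ← Finset.prod_mul_distrib]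
  simp only [← Finset.prod_mul_distrib]
  refine Finset.prod_congr rfl fun i _ => Finset.prod_congr rfl fun j hj => ?_
  have hij : i ≠ j := ne_of_lt (Finset.mem_Ioi.1 hj)
  by_cases hi : i = p
  · have hjp : j ≠ p := fun h => hij (hi.trans h.symm)
    simp only [Function.update_apply, hi, hjp, if_true, if_false, if_pos rfl, if_neg hjp]
    try ring
  · by_cases hjp : j = p
    · simp only [Function.update_apply, hi, hjp, if_pos rfl, if_neg hi, if_false, if_true]
      try ring
    · simp only [Function.update_apply, hi, hjp, if_neg hi, if_neg hjp, if_false]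
      try ring

lemma det_pow_matrix {N : ℕ} (u : Fin N → ℂ) :
    Matrix.det (Matrix.of fun i j : Fin N => u j ^ (i : ℕ))
      = ∏ i : Fin N, ∏ j ∈ Finset.Ioi i, (u j - u i) := by
  rw [← Matrix.det_transpose]
  have : Matrix.transpose (Matrix.of fun i j : Fin N => u j ^ (i : ℕ)) = Matrix.vandermonde u := by
    ext i j; simp [Matrix.vandermonde, Matrix.transpose_apply]
  rw [this, Matrix.det_vandermonde]

lemma prod_icc_fin {M : Type*} [CommMonoid M] (N : ℕ) (f : ℕ → M) :
    ∏ t ∈ Finset.Icc 1 N, f t = ∏ t : Fin N, f ((t : ℕ) + 1) := by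
  refine Finset.prod_bij' (fun a ha => (⟨a - 1, ?_⟩ : Fin N)) (fun b _ => (b : ℕ) + 1)
    (fun a ha => Finset.mem_univ _) (fun b _ => ?_) (fun a ha => ?_) (fun b _ => ?_)
    (fun a ha => ?_)
  · have := Finset.mem_Icc.1 ha; omega
  · simp only [Finset.mem_Icc]; have := b.isLt; omega
  · have := Finset.mem_Icc.1 ha
    show a - 1 + 1 = a; omega
  · apply Fin.ext; simp
  · have := Finset.mem_Icc.1 ha; congr 1
    show a = a - 1 + 1; omega

lemma prod_icc_erase_fin {M : Type*} [CommMonoid M] (N : ℕ) (p : Fin N) (f : ℕ → M) :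
    ∏ t ∈ (Finset.Icc 1 N).erase ((p : ℕ) + 1), f t
      = ∏ t ∈ Finset.univ.erase p, f ((t : ℕ) + 1) := by
  refine Finset.prod_bij' (fun a ha => (⟨a - 1, ?_⟩ : Fin N)) (fun b _ => (b : ℕ) + 1)
    (fun a ha => ?_) (fun b hb => ?_) (fun a ha => ?_) (fun b _ => ?_) (fun a ha => ?_)
  · have := Finset.mem_Icc.1 (Finset.mem_erase.1 ha).2; omega
  · have h := Finset.mem_erase.1 ha
    have h2 := Finset.mem_Icc.1 h.2
    simp only [Finset.mem_erase, Finset.mem_univ, and_true]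
    intro hEq
    apply h.1
    have : a - 1 = (p : ℕ) := by
      have := congrArg Fin.val hEq; simpa using this
    omega
  · have h := Finset.mem_erase.1 hb
    simp only [Finset.mem_erase, Finset.mem_Icc]
    have := b.isLt
    constructor
    · intro hEq; exact h.1 (Fin.ext (by omega))
    · omega
  · have := Finset.mem_Icc.1 (Finset.mem_erase.1 ha).2
    show a - 1 + 1 = a; omega
  · apply Fin.ext; simp
  · have := Finset.mem_Icc.1 (Finset.mem_erase.1 ha).2; congr 1
    show a = a - 1 + 1; omega

lemma circleIntegral_residue (b : ℂ) (ε : ℝ) (hε : 0 < ε) (g : ℂ → ℂ)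
    (hg : ∀ w ∈ Metric.closedBall b ε, DifferentiableAt ℂ g w) :
    (∮ w in C(b, ε), (w - b)⁻¹ * g w) = (2 * (Real.pi : ℂ) * Complex.I) * g b := by
  have h := DifferentiableOn.circleIntegral_sub_inv_smul
    (fun w hw => (hg w hw).differentiableWithinAt) (Metric.mem_ball_self hε)
  simpa [smul_eq_mul] using h

lemma pow_eq_pow_exists (k : ℕ) (hk : 1 ≤ k) (b w : ℂ) (hb : b ≠ 0) (h : w ^ k = b ^ k) :
    ∃ m, m < k ∧ w = omegaK k ^ m * b := by
  haveI : NeZero k := ⟨by omega⟩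
  have h1 : (w / b) ^ k = 1 := by
    rw [div_pow, h, div_self (pow_ne_zero _ hb)]
  obtain ⟨m, hm, hmeq⟩ := (Complex.isPrimitiveRoot_exp k (by omega)).eq_pow_of_pow_eq_one h1
  refine ⟨m, hm, ?_⟩
  have : omegaK k ^ m = w / b := by
    rw [omegaK]; convert hmeq using 3
  rw [this, div_mul_cancel₀ _ hb]

lemma circleIntegral_sum {ι : Type*} (s : Finset ι) (f : ι → ℂ → ℂ) (c : ℂ) (R : ℝ)
    (hf : ∀ i ∈ s, CircleIntegrable (f i) c R) :
    (∮ z in C(c, R), ∑ i ∈ s, f i z) = ∑ i ∈ s, ∮ z in C(c, R), f i z := by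
  simp only [circleIntegral, smul_eq_mul, Finset.mul_sum]
  rw [intervalIntegral.integral_finset_sum]
  intro i hi
  have := (circleIntegrable_iff R).mp (hf i hi)
  simpa [smul_eq_mul] using this
lemma hdetN_eq (N k : ℕ) (β : ℕ → ℂ) :
    hdetN N (fun i => k * (i - 1)) β
      = ∏ i : Fin N, ∏ j ∈ Finset.Ioi i, (β ((j : ℕ) + 1) ^ k - β ((i : ℕ) + 1) ^ k) := by
  rw [hdetN, ← det_pow_matrix (fun t : Fin N => β ((t : ℕ) + 1) ^ k)]
  congr 1
  ext i j
  simp [Nat.add_sub_cancel, pow_mul]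

lemma hdetSubN_eq (N k : ℕ) (β : ℕ → ℂ) (p : Fin N) (z : ℂ) :
    hdetSubN N (fun i => k * (i - 1)) β ((p : ℕ) + 1) z
      = ∏ i : Fin N, ∏ j ∈ Finset.Ioi i,
          (Function.update (fun t : Fin N => β ((t : ℕ) + 1) ^ k) p (z ^ k) j -
            Function.update (fun t : Fin N => β ((t : ℕ) + 1) ^ k) p (z ^ k) i) := by
  rw [hdetSubN,
    ← det_pow_matrix (Function.update (fun t : Fin N => β ((t : ℕ) + 1) ^ k) p (z ^ k))]
  congr 1
  ext i j
  by_cases h : j = p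
  · simp [h, Nat.add_sub_cancel, pow_mul]
  · have h' : (j : ℕ) + 1 ≠ (p : ℕ) + 1 := by
      intro hEq; exact h (Fin.ext (by omega))
    simp [Function.update_apply, h, h', Nat.add_sub_cancel, pow_mul]
    intro hEq; exact absurd (Fin.ext hEq) h

lemma hdet_ratio (N k : ℕ) (β : ℕ → ℂ)
    (hdist : ∀ i j : Fin N, i ≠ j → β ((i : ℕ) + 1) ^ k ≠ β ((j : ℕ) + 1) ^ k)
    (p : Fin N) (z : ℂ) :
    hdetSubN N (fun i => k * (i - 1)) β ((p : ℕ) + 1) z / hdetN N (fun i => k * (i - 1)) β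
      = (∏ t ∈ Finset.univ.erase p, (z ^ k - β ((t : ℕ) + 1) ^ k)) /
        ∏ t ∈ Finset.univ.erase p, (β ((p : ℕ) + 1) ^ k - β ((t : ℕ) + 1) ^ k) := by
  have hD : hdetN N (fun i => k * (i - 1)) β ≠ 0 := by
    rw [hdetN_eq]
    refine Finset.prod_ne_zero_iff.2 fun i _ => Finset.prod_ne_zero_iff.2 fun j hj => ?_
    exact sub_ne_zero.2 (hdist j i (ne_of_gt (Finset.mem_Ioi.1 hj)))
  have hE : (∏ t ∈ Finset.univ.erase p, (β ((p : ℕ) + 1) ^ k - β ((t : ℕ) + 1) ^ k)) ≠ 0 :=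
    Finset.prod_ne_zero_iff.2 fun t ht =>
      sub_ne_zero.2 (hdist p t (Ne.symm (Finset.mem_erase.1 ht).1))
  rw [div_eq_div_iff hD hE, hdetSubN_eq, hdetN_eq]
  rw [vand_update (fun t : Fin N => β ((t : ℕ) + 1) ^ k) p (z ^ k)]
  ring

end Helpers

set_option maxHeartbeats 2000000 in
/-- Theorem 2 of the paper (equation (2.17)): in the equally spaced case
`k_j = k(j−1)`, the sum of single contour integrals equals the double contour integral, the
`w`-integration being over small circles `|w − β_j| = ε_j` around the `β_j` avoiding the
other zeros of `w^k − β_t^k`. -/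
theorem equal_spacing_double_integral (N k : ℕ) (hN : 1 ≤ N) (hk : 1 ≤ k)
    (α β : ℕ → ℂ)
    (hα : ∀ l, 1 ≤ l → l ≤ N → ‖α l‖ < 1)
    (hβ : ∀ i, 1 ≤ i → i ≤ N → 0 < ‖β i‖ ∧ ‖β i‖ < 1)
    (hdist : ∀ i j, 1 ≤ i → i ≤ N → 1 ≤ j → j ≤ N → i ≠ j → β i ^ k ≠ β j ^ k)
    (ε : ℕ → ℝ)
    (hε : ∀ j, 1 ≤ j → j ≤ N → 0 < ε j ∧
      ∀ w : ℂ, ‖w - β j‖ ≤ ε j →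
        ‖w‖ < 1 ∧ w ≠ 0 ∧
          ∀ m t, m ≤ k - 1 → 1 ≤ t → t ≤ N → ¬(m = 0 ∧ t = j) →
            w ≠ (omegaK k) ^ m * β t)
    (s₁ s₂ : ℕ) (hs₁ : s₁ ≤ N) (hs₂ : s₂ ≤ N) (x₁ x₂ : ℕ) :
    (∑ j ∈ Finset.Icc 1 N,
        (1 / (2 * (Real.pi : ℂ) * Complex.I)) *
          ∮ z in C(0, 1),
            (hdetSubN N (fun i => k * (i - 1)) β j z / hdetN N (fun i => k * (i - 1)) β) *
              (∏ i ∈ Finset.Icc 1 s₂, (1 - α i * β j)) * β j ^ x₂ *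
              (∏ l ∈ Finset.Icc 1 s₁, (1 - α l * z)⁻¹) * z ^ (-((x₁ : ℤ) + 1)))
      = ((k : ℂ) / (2 * (Real.pi : ℂ) * Complex.I) ^ 2) *
          ∮ z in C(0, 1), ∑ j ∈ Finset.Icc 1 N,
            ∮ w in C(β j, ε j),
              ((∏ i ∈ Finset.Icc 1 s₂, (1 - α i * w)) *
                  ∏ t ∈ Finset.Icc 1 N, (z ^ k - β t ^ k)) /
                  ((∏ l ∈ Finset.Icc 1 s₁, (1 - α l * z)) *
                    ∏ t ∈ Finset.Icc 1 N, (w ^ k - β t ^ k)) *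
                (w ^ (x₂ + k - 1) * z ^ (-((x₁ : ℤ) + 1)) * (z ^ k - w ^ k)⁻¹) := by
  haveI : NeZero k := ⟨by omega⟩
  have hkC : (k : ℂ) ≠ 0 := Nat.cast_ne_zero.2 (by omega)
  have h2πI : (2 * (Real.pi : ℂ) * Complex.I) ≠ 0 := by
    simp [Real.pi_ne_zero, Complex.I_ne_zero]
  have hzpow : ∀ z : ℂ, z ^ (-((x₁ : ℤ) + 1)) = (z ^ (x₁ + 1))⁻¹ := by
    intro z
    rw [show (-((x₁ : ℤ) + 1)) = -((x₁ + 1 : ℕ) : ℤ) by push_cast; ring, zpow_neg, zpow_natCast]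
  simp only [hzpow]
  -- a nonvanishing fact on the unit circle
  have hone : ∀ (l : ℕ) (z : ℂ), l ∈ Finset.Icc 1 s₁ → ‖z‖ = 1 →
      1 - α l * z ≠ 0 := by
    intro l z hl hz h0
    have h1 : α l * z = 1 := by
      have := sub_eq_zero.1 h0; exact this.symm
    have h2 : ‖α l * z‖ = 1 := by rw [h1]; simp
    rw [norm_mul, hz, mul_one] at h2
    have hl' := Finset.mem_Icc.1 hl
    exact absurd h2 (ne_of_lt (hα l hl'.1 (le_trans hl'.2 hs₁)))
  -- the key residue computation
  have key : ∀ z : ℂ, ‖z‖ = 1 → ∀ j, j ∈ Finset.Icc 1 N →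
      (∮ w in C(β j, ε j),
        ((∏ i ∈ Finset.Icc 1 s₂, (1 - α i * w)) *
            ∏ t ∈ Finset.Icc 1 N, (z ^ k - β t ^ k)) /
            ((∏ l ∈ Finset.Icc 1 s₁, (1 - α l * z)) *
              ∏ t ∈ Finset.Icc 1 N, (w ^ k - β t ^ k)) *
          (w ^ (x₂ + k - 1) * (z ^ (x₁ + 1))⁻¹ * (z ^ k - w ^ k)⁻¹))
      = 2 * (Real.pi : ℂ) * Complex.I * (k : ℂ)⁻¹ *
        ((hdetSubN N (fun i => k * (i - 1)) β j z / hdetN N (fun i => k * (i - 1)) β) *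
          (∏ i ∈ Finset.Icc 1 s₂, (1 - α i * β j)) * β j ^ x₂ *
          (∏ l ∈ Finset.Icc 1 s₁, (1 - α l * z)⁻¹) * (z ^ (x₁ + 1))⁻¹) := by
    intro z hz j hj
    rw [Finset.mem_Icc] at hj
    obtain ⟨hεj, hεball⟩ := hε j hj.1 hj.2
    obtain ⟨hbj0, hbj1⟩ := hβ j hj.1 hj.2
    have hbne : β j ≠ 0 := fun h => by simp [h] at hbj0
    have hjmem : j ∈ Finset.Icc 1 N := Finset.mem_Icc.2 hj
    have hP₁ : (∏ l ∈ Finset.Icc 1 s₁, (1 - α l * z)) ≠ 0 :=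
      Finset.prod_ne_zero_iff.2 fun l hl => hone l z hl hz
    set S : ℂ → ℂ := fun w => ∑ i ∈ Finset.range k, w ^ i * β j ^ (k - 1 - i) with hSdef
    set Q : ℂ → ℂ := fun w => ∏ t ∈ (Finset.Icc 1 N).erase j, (w ^ k - β t ^ k) with hQdef
    have hSb : S (β j) = (k : ℂ) * β j ^ (k - 1) := by
      simp only [hSdef]
      rw [Finset.sum_congr rfl (fun i hi => ?_), Finset.sum_const, Finset.card_range,
        nsmul_eq_mul]
      rw [← pow_add]
      congr 1
      have := Finset.mem_range.1 hi; omega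
    have hWfacts : ∀ w : ℂ, w ∈ Metric.closedBall (β j) (ε j) →
        (∀ t, 1 ≤ t → t ≤ N → w ^ k = β t ^ k → t = j ∧ w = β j) ∧ ‖w‖ < 1 := by
      intro w hw
      rw [Metric.mem_closedBall, Complex.dist_eq] at hw
      obtain ⟨habs, hw0, havoid⟩ := hεball w hw
      refine ⟨?_, habs⟩
      intro t ht1 htN hpow
      have hbt : β t ≠ 0 := fun h => by
        have := (hβ t ht1 htN).1; simp [h] at this
      obtain ⟨m, hmk, rfl⟩ := pow_eq_pow_exists k hk (β t) w hbt hpow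
      by_cases hmt : m = 0 ∧ t = j
      · exact ⟨hmt.2, by rw [hmt.1, hmt.2]; simp⟩
      · exact absurd rfl (havoid m t (by omega) ht1 htN hmt)
    have hzk : ‖z ^ k‖ = 1 := by rw [norm_pow, hz, one_pow]
    have hWne : ∀ w : ℂ, w ∈ Metric.closedBall (β j) (ε j) →
        S w ≠ 0 ∧ Q w ≠ 0 ∧ z ^ k - w ^ k ≠ 0 := by
      intro w hw
      obtain ⟨hroot, habs⟩ := hWfacts w hw
      have hzw : z ^ k - w ^ k ≠ 0 := by
        intro h
        have h1 : ‖w ^ k‖ < 1 := by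
          rw [norm_pow]; exact pow_lt_one₀ (norm_nonneg w) habs (by omega)
        rw [sub_eq_zero] at h
        rw [← h, hzk] at h1
        exact lt_irrefl _ h1
      have hQne : Q w ≠ 0 := by
        simp only [hQdef]
        refine Finset.prod_ne_zero_iff.2 fun t ht => sub_ne_zero.2 ?_
        obtain ⟨htj, htIcc⟩ := Finset.mem_erase.1 ht
        rw [Finset.mem_Icc] at htIcc
        intro hEq
        exact htj ((hroot t htIcc.1 htIcc.2 hEq).1)
      refine ⟨?_, hQne, hzw⟩
      intro hS0
      by_cases hwb : w = β j
      · rw [hwb, hSb] at hS0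
        exact (mul_ne_zero hkC (pow_ne_zero _ hbne)) hS0
      · have hgeo : S w * (w - β j) = w ^ k - β j ^ k := by
          simp only [hSdef]; exact geom_sum₂_mul w (β j) k
        rw [hS0, zero_mul] at hgeo
        have hpow : w ^ k = β j ^ k := sub_eq_zero.1 hgeo.symm
        exact hwb (hroot j hj.1 hj.2 hpow).2
    set g : ℂ → ℂ := fun w =>
      ((∏ i ∈ Finset.Icc 1 s₂, (1 - α i * w)) *
          ∏ t ∈ Finset.Icc 1 N, (z ^ k - β t ^ k)) *
        ((∏ l ∈ Finset.Icc 1 s₁, (1 - α l * z)) * (S w * Q w))⁻¹ *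
        (w ^ (x₂ + k - 1) * (z ^ (x₁ + 1))⁻¹ * (z ^ k - w ^ k)⁻¹) with hgdef
    have hgdiff : ∀ w ∈ Metric.closedBall (β j) (ε j), DifferentiableAt ℂ g w := by
      intro w hw
      obtain ⟨hSne, hQne, hzwne⟩ := hWne w hw
      have hSd : DifferentiableAt ℂ S w := by
        simp only [hSdef]
        exact DifferentiableAt.fun_sum fun i _ => (differentiableAt_pow i).mul_const _
      have hQd : DifferentiableAt ℂ Q w := by
        simp only [hQdef]
        exact DifferentiableAt.fun_finsetProd fun t _ => (differentiableAt_pow k).sub_const _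
      have hP2d : DifferentiableAt ℂ
          (fun w : ℂ => ∏ i ∈ Finset.Icc 1 s₂, (1 - α i * w)) w :=
        DifferentiableAt.fun_finsetProd fun i _ =>
          (differentiableAt_const _).sub (differentiableAt_id.const_mul _)
      have hden : ((∏ l ∈ Finset.Icc 1 s₁, (1 - α l * z)) * (S w * Q w)) ≠ 0 :=
        mul_ne_zero hP₁ (mul_ne_zero hSne hQne)
      simp only [hgdef]
      refine DifferentiableAt.mul (DifferentiableAt.mul ?_ ?_) ?_
      · exact hP2d.mul_const _
      · exact ((differentiableAt_const _).mul (hSd.mul hQd)).inv hden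
      · refine DifferentiableAt.mul (DifferentiableAt.mul ?_ (differentiableAt_const _)) ?_
        · exact differentiableAt_pow _
        · exact ((differentiableAt_const _).sub (differentiableAt_pow k)).inv hzwne
    have hfac : ∀ w : ℂ, (∏ t ∈ Finset.Icc 1 N, (w ^ k - β t ^ k))
        = (S w * (w - β j)) * Q w := by
      intro w
      rw [← Finset.mul_prod_erase (Finset.Icc 1 N) _ hjmem]
      simp only [hSdef, hQdef]
      rw [geom_sum₂_mul]
    have hEqOn : Set.EqOn
        (fun w : ℂ =>
          ((∏ i ∈ Finset.Icc 1 s₂, (1 - α i * w)) *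
              ∏ t ∈ Finset.Icc 1 N, (z ^ k - β t ^ k)) /
              ((∏ l ∈ Finset.Icc 1 s₁, (1 - α l * z)) *
                ∏ t ∈ Finset.Icc 1 N, (w ^ k - β t ^ k)) *
            (w ^ (x₂ + k - 1) * (z ^ (x₁ + 1))⁻¹ * (z ^ k - w ^ k)⁻¹))
        (fun w : ℂ => (w - β j)⁻¹ * g w) (Metric.sphere (β j) (ε j)) := by
      intro w _
      simp only [hgdef, hfac w, div_eq_mul_inv, mul_inv]
      ring
    rw [circleIntegral.integral_congr (le_of_lt hεj) hEqOn,
      circleIntegral_residue (β j) (ε j) hεj g hgdiff]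
    -- now the algebraic identity at w = β j
    obtain ⟨hSbne, hQbne, hzbj⟩ := hWne (β j) (Metric.mem_closedBall_self (le_of_lt hεj))
    set p : Fin N := ⟨j - 1, by omega⟩ with hp
    have hpj : (p : ℕ) + 1 = j := by simp only [hp]; omega
    have hratio : hdetSubN N (fun i => k * (i - 1)) β j z / hdetN N (fun i => k * (i - 1)) β
        = (∏ t ∈ Finset.univ.erase p, (z ^ k - β ((t : ℕ) + 1) ^ k)) /
          ∏ t ∈ Finset.univ.erase p, (β j ^ k - β ((t : ℕ) + 1) ^ k) := by
      have hd : ∀ i j : Fin N, i ≠ j → β ((i : ℕ) + 1) ^ k ≠ β ((j : ℕ) + 1) ^ k := by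
        intro i j' hij
        refine hdist _ _ (by omega) (by omega) (by omega) (by omega) ?_
        intro hEq
        exact hij (Fin.ext (by omega))
      have := hdet_ratio N k β hd p z
      rw [hpj] at this
      exact this
    have hQb : Q (β j) = ∏ t ∈ Finset.univ.erase p, (β j ^ k - β ((t : ℕ) + 1) ^ k) := by
      simp only [hQdef]
      rw [← hpj, prod_icc_erase_fin]
    have hPz : (∏ t ∈ Finset.Icc 1 N, (z ^ k - β t ^ k))
        = (z ^ k - β j ^ k) * ∏ t ∈ Finset.univ.erase p, (z ^ k - β ((t : ℕ) + 1) ^ k) := by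
      rw [← Finset.mul_prod_erase (Finset.Icc 1 N) _ hjmem]
      congr 1
      rw [← hpj, prod_icc_erase_fin]
    have hBrne : (∏ t ∈ Finset.univ.erase p, (β j ^ k - β ((t : ℕ) + 1) ^ k)) ≠ 0 := by
      rw [← hQb]; exact hQbne
    have hpow2 : β j ^ (x₂ + k - 1) = β j ^ x₂ * β j ^ (k - 1) := by
      rw [← pow_add]; congr 1; omega
    simp only [hgdef, hSb, hQb, hPz, hratio, hpow2, Finset.prod_inv_distrib]
    have hbpne : β j ^ (k - 1) ≠ 0 := pow_ne_zero _ hbne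
    have hzne : z ≠ 0 := by
      intro h0; rw [h0] at hz; simp at hz
    have hzpne : z ^ (x₁ + 1) ≠ 0 := pow_ne_zero _ hzne
    have hzbj' : -β j ^ k + z ^ k ≠ 0 := by rw [neg_add_eq_sub]; exact hzbj
    field_simp
    have hc1 : ∏ x ∈ Finset.Icc 1 s₁, (1 - z * α x) = ∏ x ∈ Finset.Icc 1 s₁, (1 - α x * z) :=
      Finset.prod_congr rfl fun _ _ => by ring
    have hc2 : ∏ x ∈ Finset.Icc 1 s₂, (1 - β j * α x) = ∏ x ∈ Finset.Icc 1 s₂, (1 - α x * β j) :=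
      Finset.prod_congr rfl fun _ _ => by ring
    rw [hc1, hc2, eq_div_iff hP₁]
    ring
  -- continuity/integrability of the single-integrand terms
  have hTint : ∀ j, j ∈ Finset.Icc 1 N → CircleIntegrable (fun z : ℂ =>
      (hdetSubN N (fun i => k * (i - 1)) β j z / hdetN N (fun i => k * (i - 1)) β) *
        (∏ i ∈ Finset.Icc 1 s₂, (1 - α i * β j)) * β j ^ x₂ *
        (∏ l ∈ Finset.Icc 1 s₁, (1 - α l * z)⁻¹) * (z ^ (x₁ + 1))⁻¹) 0 1 := by
    intro j _
    apply ContinuousOn.circleIntegrable zero_le_one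
    have habs : ∀ z : ℂ, z ∈ Metric.sphere (0 : ℂ) 1 → ‖z‖ = 1 := by
      intro z hz
      rw [Metric.mem_sphere, Complex.dist_eq, sub_zero] at hz
      exact hz
    have hdetc : Continuous fun z => hdetSubN N (fun i => k * (i - 1)) β j z := by
      unfold hdetSubN
      apply Continuous.matrix_det
      apply continuous_matrix
      intro i j'
      by_cases h : (j' : ℕ) + 1 = j
      · simpa [h] using (continuous_pow (k * (((i : ℕ)) + 1 - 1)))
      · simp only [Matrix.of_apply, h, if_false]
        exact continuous_const
    refine ContinuousOn.mul (ContinuousOn.mul (ContinuousOn.mul (ContinuousOn.mul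
      ?_ continuousOn_const) continuousOn_const) ?_) ?_
    · exact (hdetc.div_const _).continuousOn
    · simp only [Finset.prod_inv_distrib]
      refine ContinuousOn.inv₀ (Continuous.continuousOn ?_) ?_
      · exact continuous_finset_prod _ fun l _ =>
          continuous_const.sub (continuous_const.mul continuous_id)
      · intro z hz
        exact Finset.prod_ne_zero_iff.2 fun l hl => hone l z hl (habs z hz)
    · refine ContinuousOn.inv₀ (continuous_pow _).continuousOn ?_
      intro z hz
      apply pow_ne_zero
      intro h0
      rw [h0] at hz
      have := habs 0 hz
      simp at this
  -- assemble
  rw [← Finset.mul_sum,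
    ← circleIntegral_sum (Finset.Icc 1 N) _ 0 1 hTint]
  have hRHS : (∮ z in C(0, 1), ∑ j ∈ Finset.Icc 1 N,
      ∮ w in C(β j, ε j),
        ((∏ i ∈ Finset.Icc 1 s₂, (1 - α i * w)) *
            ∏ t ∈ Finset.Icc 1 N, (z ^ k - β t ^ k)) /
            ((∏ l ∈ Finset.Icc 1 s₁, (1 - α l * z)) *
              ∏ t ∈ Finset.Icc 1 N, (w ^ k - β t ^ k)) *
          (w ^ (x₂ + k - 1) * (z ^ (x₁ + 1))⁻¹ * (z ^ k - w ^ k)⁻¹))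
      = ∮ z in C(0, 1), (2 * (Real.pi : ℂ) * Complex.I * (k : ℂ)⁻¹ *
          ∑ j ∈ Finset.Icc 1 N,
            ((hdetSubN N (fun i => k * (i - 1)) β j z / hdetN N (fun i => k * (i - 1)) β) *
              (∏ i ∈ Finset.Icc 1 s₂, (1 - α i * β j)) * β j ^ x₂ *
              (∏ l ∈ Finset.Icc 1 s₁, (1 - α l * z)⁻¹) * (z ^ (x₁ + 1))⁻¹)) := by
    apply circleIntegral.integral_congr zero_le_one
    intro z hz
    rw [Metric.mem_sphere, Complex.dist_eq, sub_zero] at hz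
    simp only [Finset.mul_sum]
    exact Finset.sum_congr rfl fun j hj => key z hz j hj
  rw [hRHS, circleIntegral.integral_const_mul]
  generalize (∮ z in C(0, 1), ∑ j ∈ Finset.Icc 1 N,
      ((hdetSubN N (fun i => k * (i - 1)) β j z / hdetN N (fun i => k * (i - 1)) β) *
        (∏ i ∈ Finset.Icc 1 s₂, (1 - α i * β j)) * β j ^ x₂ *
        (∏ l ∈ Finset.Icc 1 s₁, (1 - α l * z)⁻¹) * (z ^ (x₁ + 1))⁻¹)) = I₀
  field_simp
end

section
/- Fix an integer k ≥ 3 and γ ∈ (0,1), and set ω_k = e^{2πi/k}. Then there exists a constant C > 0 such that for every t ∈ [−π, π] and every integer j with |j| ≤ k/2: (1 + Cπj(πj+t)/k²) · |1 − γe^{it/k}| ≤ |1 − ω_k^j γ e^{it/k}|. -/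
open Real

/-- squared modulus of `1 - γ e^{ix}`. -/
lemma abs_sq_one_sub_mul_exp (γ x : ℝ) :
    ‖1 - (γ : ℂ) * Complex.exp ((x : ℝ) * Complex.I)‖ ^ 2
      = 1 - 2 * γ * Real.cos x + γ ^ 2 := by
  rw [Complex.sq_norm, Complex.normSq_apply]
  simp [Complex.exp_ofReal_mul_I_re, Complex.exp_ofReal_mul_I_im]
  nlinarith [Real.sin_sq_add_cos_sq x]

lemma sin_lb_56 (x : ℝ) (h0 : 0 ≤ x) (h1 : x ≤ 5 * Real.pi / 6) :
    2 / (5 * Real.pi) * x ≤ Real.sin x := by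
  have hπ := Real.pi_pos
  by_cases hx : x ≤ Real.pi / 2
  · have h := Real.mul_le_sin h0 hx
    have : 2 / (5 * Real.pi) * x ≤ 2 / Real.pi * x := by
      apply mul_le_mul_of_nonneg_right _ h0
      rw [div_le_div_iff₀ (by positivity) (by positivity)]; nlinarith
    linarith
  · push_neg at hx
    rw [← Real.sin_pi_sub]
    have h2 : 0 ≤ Real.pi - x := by linarith
    have h3 : Real.pi - x ≤ Real.pi / 2 := by linarith
    have h := Real.mul_le_sin h2 h3
    have key : 2 / (5 * Real.pi) * x ≤ 2 / Real.pi * (Real.pi - x) := by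
      rw [div_mul_eq_mul_div, div_mul_eq_mul_div,
        div_le_div_iff₀ (by positivity) (by positivity)]
      nlinarith
    linarith

lemma sin_prod_lb (a b : ℝ) (ha0 : 0 ≤ a) (ha : a ≤ Real.pi / 2)
    (hb0 : 0 ≤ b) (hb : b ≤ 5 * Real.pi / 6) :
    4 / (5 * Real.pi ^ 2) * (a * b) ≤ Real.sin a * Real.sin b := by
  have hπ := Real.pi_pos
  have h1 := Real.mul_le_sin ha0 ha
  have h2 := sin_lb_56 b hb0 hb
  have hx : (0:ℝ) ≤ 2 / Real.pi * a := by positivity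
  have hy : (0:ℝ) ≤ 2 / (5 * Real.pi) * b := by positivity
  have hmul := mul_le_mul h1 h2 hy (le_trans hx h1)
  have heq : 2 / Real.pi * a * (2 / (5 * Real.pi) * b) = 4 / (5 * Real.pi ^ 2) * (a * b) := by
    field_simp; ring
  linarith [heq ▸ hmul]

set_option maxHeartbeats 800000 in
/-- for `k ≥ 3` and `γ ∈ (0,1)` there is a constant `C > 0` such that for every
`t ∈ [−π, π]` and every integer `j` with `|j| ≤ k/2`,
`(1 + Cπj(πj+t)/k²)·|1 − γe^{it/k}| ≤ |1 − ω_k^j γ e^{it/k}|`. -/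
theorem angle_lemma (k : ℕ) (hk : 3 ≤ k) (γ : ℝ) (hγ : γ ∈ Set.Ioo (0 : ℝ) 1) :
    ∃ C : ℝ, 0 < C ∧
      ∀ t : ℝ, t ∈ Set.Icc (-Real.pi) Real.pi → ∀ j : ℤ, 2 * |j| ≤ (k : ℤ) →
        (1 + C * Real.pi * (j : ℝ) * (Real.pi * (j : ℝ) + t) / (k : ℝ) ^ 2) *
            ‖1 - (γ : ℂ) * Complex.exp ((t / k : ℝ) * Complex.I)‖ ≤
          ‖1 - (omegaK k) ^ j * (γ : ℂ) * Complex.exp ((t / k : ℝ) * Complex.I)‖ := by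
  obtain ⟨hγ0, hγ1⟩ := hγ
  have hπ := Real.pi_pos
  obtain ⟨C, hC⟩ : ∃ C : ℝ, C = γ / (100 * Real.pi ^ 2) := ⟨_, rfl⟩
  have hC0 : 0 < C := by rw [hC]; positivity
  refine ⟨C, hC0, ?_⟩
  intro t ht j hj
  obtain ⟨ht1, ht2⟩ := ht
  have hk0 : (0:ℝ) < (k:ℝ) := by positivity
  have hk0' : ((k:ℝ)) ≠ 0 := hk0.ne'
  have hkR : (3:ℝ) ≤ (k:ℝ) := by exact_mod_cast hk
  have hjk : 2 * |(j:ℝ)| ≤ (k:ℝ) := by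
    have : ((2 * |j| : ℤ) : ℝ) ≤ ((k:ℤ):ℝ) := by exact_mod_cast hj
    push_cast at this; simpa using this
  obtain ⟨a, ha⟩ : ∃ a : ℝ, a = Real.pi * (j:ℝ) / k := ⟨_, rfl⟩
  obtain ⟨b, hb⟩ : ∃ b : ℝ, b = (Real.pi * (j:ℝ) + t) / k := ⟨_, rfl⟩
  -- rewrite the RHS as 1 - γ e^{iθ}
  have hexp : Complex.exp ((j:ℂ) * (2 * (Real.pi:ℂ) * Complex.I / (k:ℂ)))
        * Complex.exp (((t / k : ℝ):ℂ) * Complex.I)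
      = Complex.exp ((((2 * Real.pi * (j:ℝ) + t) / k : ℝ):ℂ) * Complex.I) := by
    rw [← Complex.exp_add]
    congr 1
    have hkC : (k:ℂ) ≠ 0 := by exact_mod_cast hk0.ne'
    push_cast
    field_simp
  have hθrw : (omegaK k) ^ j * (γ : ℂ) * Complex.exp ((t / k : ℝ) * Complex.I)
      = (γ : ℂ) * Complex.exp (((2 * Real.pi * (j:ℝ) + t) / k : ℝ) * Complex.I) := by
    rw [omegaK, ← Complex.exp_int_mul, mul_right_comm, hexp, mul_comm]
  rw [hθrw]
  obtain ⟨A, hA⟩ : ∃ A : ℝ,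
      A = ‖1 - (γ : ℂ) * Complex.exp ((t / k : ℝ) * Complex.I)‖ := ⟨_, rfl⟩
  obtain ⟨B, hB⟩ : ∃ B : ℝ,
      B = ‖1 - (γ : ℂ) *
        Complex.exp (((2 * Real.pi * (j:ℝ) + t) / k : ℝ) * Complex.I)‖ := ⟨_, rfl⟩
  rw [← hA, ← hB]
  have hA0 : 0 ≤ A := hA ▸ norm_nonneg _
  have hB0 : 0 ≤ B := hB ▸ norm_nonneg _
  have hA2 : A ^ 2 = 1 - 2 * γ * Real.cos (t / k) + γ ^ 2 := by
    rw [hA]; exact abs_sq_one_sub_mul_exp γ (t / k)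
  have hB2 : B ^ 2 = 1 - 2 * γ * Real.cos ((2 * Real.pi * (j:ℝ) + t) / k) + γ ^ 2 := by
    rw [hB]; exact abs_sq_one_sub_mul_exp γ ((2 * Real.pi * (j:ℝ) + t) / k)
  -- gap identity
  have hgap : B ^ 2 - A ^ 2 = 4 * γ * (Real.sin a * Real.sin b) := by
    rw [hA2, hB2]
    have h1 := Real.cos_sub_cos (t / k) ((2 * Real.pi * (j:ℝ) + t) / k)
    have h2 : (t / k + (2 * Real.pi * (j:ℝ) + t) / k) / 2 = b := by
      rw [hb]; field_simp; ring
    have h3 : (t / k - (2 * Real.pi * (j:ℝ) + t) / k) / 2 = -a := by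
      rw [ha]; field_simp; ring
    rw [h2, h3, Real.sin_neg] at h1
    linear_combination 2 * γ * h1
  -- the key sine-product bound plus nonnegativity
  have hkey : 4 / (5 * Real.pi ^ 2) * (a * b) ≤ Real.sin a * Real.sin b ∧ 0 ≤ a * b := by
    rcases lt_trichotomy j 0 with hjneg | hj0 | hjpos
    · have hj1 : (j:ℝ) ≤ -1 := by
        have h : j ≤ -1 := by omega
        exact_mod_cast h
      have hjabs : |(j:ℝ)| = -(j:ℝ) := abs_of_neg (by linarith)
      rw [hjabs] at hjk
      have hπj : Real.pi * (j:ℝ) ≤ Real.pi * (-1) := mul_le_mul_of_nonneg_left hj1 hπ.le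
      have hπjk : Real.pi * (2 * -(j:ℝ)) ≤ Real.pi * (k:ℝ) :=
        mul_le_mul_of_nonneg_left hjk hπ.le
      have hπk : Real.pi * 3 ≤ Real.pi * (k:ℝ) := mul_le_mul_of_nonneg_left hkR hπ.le
      have ha0' : 0 ≤ -a := by
        rw [ha, neg_nonneg]
        apply div_nonpos_of_nonpos_of_nonneg (by linarith) hk0.le
      have haub : -a ≤ Real.pi / 2 := by
        rw [ha, ← neg_div, div_le_iff₀ hk0]; linarith
      have hb0' : 0 ≤ -b := by
        rw [hb, neg_nonneg]
        apply div_nonpos_of_nonpos_of_nonneg (by linarith) hk0.le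
      have hbub : -b ≤ 5 * Real.pi / 6 := by
        rw [hb, ← neg_div, div_le_iff₀ hk0]; linarith
      have hp := sin_prod_lb (-a) (-b) ha0' haub hb0' hbub
      rw [Real.sin_neg, Real.sin_neg, neg_mul_neg, neg_mul_neg] at hp
      have hab : 0 ≤ a * b := by
        have := mul_nonneg ha0' hb0'
        rwa [neg_mul_neg] at this
      exact ⟨hp, hab⟩
    · have ha0 : a = 0 := by rw [ha, hj0]; norm_num
      constructor <;> simp [ha0]
    · have hj1 : (1:ℝ) ≤ (j:ℝ) := by exact_mod_cast hjpos
      have hjabs : |(j:ℝ)| = (j:ℝ) := abs_of_pos (by linarith)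
      rw [hjabs] at hjk
      have hπjk : Real.pi * (2 * (j:ℝ)) ≤ Real.pi * (k:ℝ) :=
        mul_le_mul_of_nonneg_left hjk hπ.le
      have hπk : Real.pi * 3 ≤ Real.pi * (k:ℝ) := mul_le_mul_of_nonneg_left hkR hπ.le
      have hπj : Real.pi * 1 ≤ Real.pi * (j:ℝ) := mul_le_mul_of_nonneg_left hj1 hπ.le
      have ha0' : 0 ≤ a := by
        rw [ha]; apply div_nonneg (by linarith) hk0.le
      have haub : a ≤ Real.pi / 2 := by
        rw [ha, div_le_iff₀ hk0]; linarith
      have hb0' : 0 ≤ b := by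
        rw [hb]; apply div_nonneg (by linarith) hk0.le
      have hbub : b ≤ 5 * Real.pi / 6 := by
        rw [hb, div_le_iff₀ hk0]; linarith
      exact ⟨sin_prod_lb a b ha0' haub hb0' hbub, mul_nonneg ha0' hb0'⟩
  obtain ⟨hsin, hab0⟩ := hkey
  -- bound on a*b
  have habs_a : |a| ≤ Real.pi := by
    rw [ha, abs_div, abs_mul, abs_of_pos hπ, abs_of_pos hk0, div_le_iff₀ hk0]
    have := mul_le_mul_of_nonneg_left hjk hπ.le
    have := mul_nonneg hπ.le (abs_nonneg (j:ℝ))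
    linarith
  have habs_b : |b| ≤ Real.pi := by
    rw [hb, abs_div, abs_of_pos hk0, div_le_iff₀ hk0]
    have h1 : |Real.pi * (j:ℝ) + t| ≤ Real.pi * |(j:ℝ)| + |t| := by
      calc |Real.pi * (j:ℝ) + t| ≤ |Real.pi * (j:ℝ)| + |t| := abs_add_le _ _
        _ = Real.pi * |(j:ℝ)| + |t| := by rw [abs_mul, abs_of_pos hπ]
    have h2 : |t| ≤ Real.pi := abs_le.mpr ⟨ht1, ht2⟩
    have := mul_le_mul_of_nonneg_left hjk hπ.le
    have := mul_le_mul_of_nonneg_left hkR hπ.le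
    have := mul_nonneg hπ.le (abs_nonneg (j:ℝ))
    linarith
  have habπ : a * b ≤ Real.pi ^ 2 := by
    calc a * b ≤ |a * b| := le_abs_self _
      _ = |a| * |b| := abs_mul a b
      _ ≤ Real.pi * Real.pi := mul_le_mul habs_a habs_b (abs_nonneg _) hπ.le
      _ = Real.pi ^ 2 := by ring
  -- coefficient rewrite
  have hco : C * Real.pi * (j:ℝ) * (Real.pi * (j:ℝ) + t) / (k:ℝ) ^ 2 = C * (a * b) := by
    rw [ha, hb]; field_simp
  rw [hco]
  -- scaled gap
  have hγC : γ = 100 * C * Real.pi ^ 2 := by rw [hC]; field_simp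
  have hgap2 : 320 * C * (a * b) ≤ B ^ 2 - A ^ 2 := by
    rw [hgap]
    have h4 : 4 * γ * (4 / (5 * Real.pi ^ 2) * (a * b)) ≤ 4 * γ * (Real.sin a * Real.sin b) :=
      mul_le_mul_of_nonneg_left hsin (by positivity)
    have heq : 4 * γ * (4 / (5 * Real.pi ^ 2) * (a * b)) = 320 * C * (a * b) := by
      rw [hγC]; field_simp; ring
    linarith [heq ▸ h4]
  -- A² ≤ 4
  have hA2le : A ^ 2 ≤ 4 := by
    rw [hA2]
    nlinarith [Real.neg_one_le_cos (t / (k:ℝ)), hγ0, hγ1]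
  have hA2nn : 0 ≤ A ^ 2 := sq_nonneg A
  -- main square inequality
  have h7 : 0 ≤ 2 * C + C ^ 2 * (a * b) := by
    have := mul_nonneg (sq_nonneg C) hab0
    linarith
  have hstep : (2 * C + C ^ 2 * (a * b)) * A ^ 2 ≤ 12 * C := by
    have h5 : C ^ 2 * (a * b) ≤ C ^ 2 * Real.pi ^ 2 :=
      mul_le_mul_of_nonneg_left habπ (sq_nonneg C)
    have h6 : C * Real.pi ^ 2 ≤ 1 / 100 := by
      rw [hC, div_mul_eq_mul_div, div_le_div_iff₀ (by positivity) (by norm_num)]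
      nlinarith
    have h8 : (2 * C + C ^ 2 * (a * b)) * A ^ 2 ≤ (2 * C + C ^ 2 * (a * b)) * 4 :=
      mul_le_mul_of_nonneg_left hA2le h7
    have h9 : C * (C * Real.pi ^ 2) ≤ C * (1 / 100) :=
      mul_le_mul_of_nonneg_left h6 hC0.le
    nlinarith [h8, h5, h9, hC0.le]
  have hsq : ((1 + C * (a * b)) * A) ^ 2 ≤ B ^ 2 := by
    have h10 : (a * b) * ((2 * C + C ^ 2 * (a * b)) * A ^ 2) ≤ (a * b) * (12 * C) :=
      mul_le_mul_of_nonneg_left hstep hab0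
    nlinarith [h10, hgap2, mul_nonneg hab0 hC0.le]
  have hLnn : 0 ≤ (1 + C * (a * b)) * A := by
    apply mul_nonneg _ hA0
    nlinarith [mul_nonneg hC0.le hab0]
  exact (pow_le_pow_iff_left₀ hLnn hB0 two_ne_zero).mp hsq
end

section
/- Let N ≥ 1, let α_1,…,α_N, β_1,…,β_N be complex numbers with |α_r| < 1 and 0 < |β_r| < 1 for all r, the β_r pairwise distinct, and let l_1 < l_2 < … < l_N be integers with l_N ≤ N−1. Then for every j ∈ {1,…,N}, every integer s_2 with 0 ≤ s_2 ≤ N, and every x_2 ∈ ℕ: (1/2πi)∮_{|z|=1} h_{l_1,…,l_N}(1/β; 1/β_j↦1/z) · ∏_{ℓ=s_2+1}^{N}(1−α_ℓ z)^{−1} · ∏_{r=1}^{N}(1−β_r/z)^{−1} · z^{x_2−1} dz = ∏_{r=1}^{s_2}(1−α_r β_j) · β_j^{x_2} · h_{l_1,…,l_N}(1/β) / [∏_{r=1}^N(1−α_r β_j) · ∏_{s=1, s≠j}^N (1−β_s/β_j)]. -/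
open Finset in
lemma pfrac (β : ℕ → ℂ) (s : Finset ℕ) :
    (∀ a ∈ s, ∀ b ∈ s, a ≠ b → β a ≠ β b) → s.Nonempty → ∀ z : ℂ, (∀ t ∈ s, z ≠ β t) →
    ∏ t ∈ s, (z - β t)⁻¹ = ∑ t ∈ s, (z - β t)⁻¹ * ∏ r ∈ s.erase t, (β t - β r)⁻¹ := by
  induction s using Finset.cons_induction with
  | empty => intro _ h; exact absurd h (by simp)
  | cons a s' ha IH =>
    intro hinj _ z hz
    rcases s'.eq_empty_or_nonempty with rfl | hne
    · simp
    have hza : z ≠ β a := hz a (mem_cons_self a s')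
    have hinj' : ∀ x ∈ s', ∀ y ∈ s', x ≠ y → β x ≠ β y := fun x hx y hy =>
      hinj x (mem_cons_of_mem hx) y (mem_cons_of_mem hy)
    have hat : ∀ t ∈ s', β a ≠ β t := fun t ht =>
      hinj a (mem_cons_self a s') t (mem_cons_of_mem ht) (fun h => ha (h ▸ ht))
    have hz' : ∀ t ∈ s', z ≠ β t := fun t ht => hz t (mem_cons_of_mem ht)
    rw [prod_cons, sum_cons, erase_cons]
    calc (z - β a)⁻¹ * ∏ t ∈ s', (z - β t)⁻¹
        = ∑ t ∈ s', (z - β a)⁻¹ * ((z - β t)⁻¹ * ∏ r ∈ s'.erase t, (β t - β r)⁻¹) := by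
          rw [IH hinj' hne z hz', Finset.mul_sum]
      _ = ∑ t ∈ s', ((z - β a)⁻¹ * ((β a - β t)⁻¹ * ∏ r ∈ s'.erase t, (β t - β r)⁻¹)
            + (z - β t)⁻¹ * ((β t - β a)⁻¹ * ∏ r ∈ s'.erase t, (β t - β r)⁻¹)) := by
          refine Finset.sum_congr rfl fun t ht => ?_
          have h1 : z - β a ≠ 0 := sub_ne_zero.2 hza
          have h2 : z - β t ≠ 0 := sub_ne_zero.2 (hz' t ht)
          have h3 : β a - β t ≠ 0 := sub_ne_zero.2 (hat t ht)
          have h4 : β t - β a ≠ 0 := sub_ne_zero.2 (hat t ht).symm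
          have key : (z - β a)⁻¹ * (z - β t)⁻¹
              = (z - β a)⁻¹ * (β a - β t)⁻¹ + (z - β t)⁻¹ * (β t - β a)⁻¹ := by
            field_simp
            ring
          linear_combination (∏ r ∈ s'.erase t, (β t - β r)⁻¹) * key
      _ = (z - β a)⁻¹ * ∑ t ∈ s', (β a - β t)⁻¹ * ∏ r ∈ s'.erase t, (β t - β r)⁻¹
            + ∑ t ∈ s', (z - β t)⁻¹ * ((β t - β a)⁻¹ * ∏ r ∈ s'.erase t, (β t - β r)⁻¹) := by
          rw [Finset.sum_add_distrib, Finset.mul_sum]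
      _ = (z - β a)⁻¹ * ∏ r ∈ s', (β a - β r)⁻¹
            + ∑ t ∈ s', (z - β t)⁻¹ * ∏ r ∈ (cons a s' ha).erase t, (β t - β r)⁻¹ := by
          rw [← IH hinj' hne (β a) (fun t ht => hat t ht)]
          congr 1
          refine Finset.sum_congr rfl fun t ht => ?_
          have hta : t ≠ a := fun h => ha (h ▸ ht)
          rw [Finset.erase_cons_of_ne ha hta.symm, prod_cons]

lemma circleIntegral_finset_sum {ι : Type*} (s : Finset ι) (f : ι → ℂ → ℂ) (c : ℂ) (R : ℝ)
    (h : ∀ i ∈ s, CircleIntegrable (f i) c R) :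
    (∮ z in C(c, R), ∑ i ∈ s, f i z) = ∑ i ∈ s, ∮ z in C(c, R), f i z := by
  simp only [circleIntegral, Finset.smul_sum]
  exact intervalIntegral.integral_finset_sum fun i hi => (h i hi).out

/-- the integral evaluation (3.16) of the paper. -/
theorem integral_evaluation (N : ℕ) (hN : 1 ≤ N) (α β : ℕ → ℂ)
    (hα : ∀ i, 1 ≤ i → i ≤ N → ‖α i‖ < 1)
    (hβ : ∀ i, 1 ≤ i → i ≤ N → 0 < ‖β i‖ ∧ ‖β i‖ < 1)
    (hdist : ∀ i j, 1 ≤ i → i ≤ N → 1 ≤ j → j ≤ N → i ≠ j → β i ≠ β j)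
    (lam : ℕ → ℤ) (hlam : ∀ i j, 1 ≤ i → i < j → j ≤ N → lam i < lam j)
    (hlamN : lam N ≤ (N : ℤ) - 1)
    (j : ℕ) (hj : 1 ≤ j) (hjN : j ≤ N) (s₂ : ℕ) (hs₂ : s₂ ≤ N) (x₂ : ℕ) :
    (1 / (2 * (Real.pi : ℂ) * Complex.I)) *
        (∮ z in C(0, 1),
          hdetSub N lam (fun t => (β t)⁻¹) j z⁻¹ *
            (∏ l ∈ Finset.Icc (s₂ + 1) N, (1 - α l * z)⁻¹) *
            (∏ t ∈ Finset.Icc 1 N, (1 - β t / z)⁻¹) * z ^ ((x₂ : ℤ) - 1))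
      = (∏ i ∈ Finset.Icc 1 s₂, (1 - α i * β j)) * β j ^ x₂ *
          hdet N lam (fun t => (β t)⁻¹) /
          ((∏ t ∈ Finset.Icc 1 N, (1 - α t * β j)) *
            ∏ s ∈ (Finset.Icc 1 N).erase j, (1 - β s / β j)) := by
  classical
  have hmemS : ∀ t, t ∈ Finset.Icc 1 N ↔ 1 ≤ t ∧ t ≤ N := by intro t; simp [Finset.mem_Icc]
  have hjS : j ∈ Finset.Icc 1 N := (hmemS j).2 ⟨hj, hjN⟩
  have hcard : (Finset.Icc 1 N).card = N := by simp [Nat.card_Icc]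
  have hβne0 : ∀ t ∈ Finset.Icc 1 N, β t ≠ 0 := fun t ht => by
    have := (hβ t ((hmemS t).1 ht).1 ((hmemS t).1 ht).2).1
    exact fun h => by simp [h] at this
  have hβlt : ∀ t ∈ Finset.Icc 1 N, ‖β t‖ < 1 := fun t ht =>
    (hβ t ((hmemS t).1 ht).1 ((hmemS t).1 ht).2).2
  -- index of column j
  have hj1N : j - 1 < N := by omega
  set jI : Fin N := ⟨j - 1, hj1N⟩ with hjIdef
  have hjI : (jI : ℕ) + 1 = j := by simp [hjIdef]; omega
  -- base matrix
  set B : Matrix (Fin N) (Fin N) ℂ :=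
    Matrix.of (fun i j' : Fin N => (β ((j' : ℕ) + 1))⁻¹ ^ lam ((i : ℕ) + 1)) with hB
  have hdetB : hdet N lam (fun t => (β t)⁻¹) = B.det := rfl
  -- bound on lam
  have hlamle : ∀ i : Fin N, lam ((i : ℕ) + 1) ≤ (N : ℤ) - 1 := by
    intro i
    rcases eq_or_lt_of_le (Nat.succ_le_of_lt i.isLt) with h | h
    · rw [show (i : ℕ) + 1 = N from h]; exact hlamN
    · exact le_trans (le_of_lt (hlam _ N (by omega) h (le_refl N))) hlamN
  set n : Fin N → ℕ := fun i => ((N : ℤ) - 1 - lam ((i : ℕ) + 1)).toNat with hn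
  have hnz : ∀ i : Fin N, (n i : ℤ) = (N : ℤ) - 1 - lam ((i : ℕ) + 1) := by
    intro i
    rw [hn, Int.toNat_of_nonneg (by have := hlamle i; omega)]
  set E : ℂ → ℂ := fun z => (B.updateCol jI fun i => z ^ n i).det with hE
  -- hdetSub as updateCol
  have hjIval : (jI : ℕ) = j - 1 := rfl
  have hsub : ∀ w : ℂ, hdetSub N lam (fun t => (β t)⁻¹) j w
      = (B.updateCol jI fun i => w ^ lam ((i : ℕ) + 1)).det := by
    intro w
    unfold hdetSub
    congr 1
    ext i j'
    simp only [Matrix.of_apply, Matrix.updateCol_apply]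
    by_cases h : j' = jI
    · rw [if_pos h, if_pos (by rw [h, hjI])]
    · rw [if_neg h, if_neg (fun hc => h (Fin.ext (by omega)))]
      rfl
  -- E at nonzero w
  have hEw : ∀ w : ℂ, w ≠ 0 → E w
      = w ^ (N - 1) * (B.updateCol jI fun i => w ^ (-lam ((i : ℕ) + 1))).det := by
    intro w hw
    have hcol : (fun i : Fin N => w ^ n i)
        = (w ^ (N - 1) : ℂ) • (fun i : Fin N => w ^ (-lam ((i : ℕ) + 1))) := by
      funext i
      rw [Pi.smul_apply, smul_eq_mul, ← zpow_natCast w (N - 1), ← zpow_natCast w (n i), hnz i,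
        ← zpow_add₀ hw]
      congr 1
      omega
    rw [hE]
    simp only [hcol]
    exact Matrix.det_updateCol_smul B jI _ _
  -- Claim 1
  have hsubE : ∀ w : ℂ, w ≠ 0 → hdetSub N lam (fun t => (β t)⁻¹) j w⁻¹
      = w ^ ((1 : ℤ) - N) * E w := by
    intro w hw
    have hcol2 : (fun i : Fin N => w⁻¹ ^ lam ((i : ℕ) + 1))
        = fun i : Fin N => w ^ (-lam ((i : ℕ) + 1)) := funext fun i => inv_zpow' w _
    rw [hsub, hcol2, hEw w hw, ← mul_assoc, ← zpow_natCast w (N - 1), ← zpow_add₀ hw,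
      show ((1 : ℤ) - N) + ((N - 1 : ℕ) : ℤ) = 0 by omega, zpow_zero, one_mul]
  -- evaluations at β t
  have hEt0 : ∀ t ∈ Finset.Icc 1 N, t ≠ j → E (β t) = 0 := by
    intro t htS htj
    obtain ⟨ht1, htN⟩ := (hmemS t).1 htS
    have ht1N : t - 1 < N := by omega
    set tI : Fin N := ⟨t - 1, ht1N⟩ with htIdef
    have htIval : (tI : ℕ) = t - 1 := rfl
    have htI : (tI : ℕ) + 1 = t := by omega
    have htj' : jI ≠ tI := fun h => htj (by
      have : (jI : ℕ) = (tI : ℕ) := congrArg Fin.val h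
      omega)
    have hcol : (fun i : Fin N => (β t) ^ (-lam ((i : ℕ) + 1))) = fun i : Fin N => B i tI := by
      funext i
      rw [hB]
      simp only [Matrix.of_apply, htI]
      exact (inv_zpow' (β t) _).symm
    rw [hEw (β t) (hβne0 t htS), hcol]
    have : (B.updateCol jI fun i => B i tI).det = 0 := by
      apply Matrix.det_zero_of_column_eq htj'
      intro k
      rw [Matrix.updateCol_self, Matrix.updateCol_ne (Ne.symm htj')]
    rw [this, mul_zero]
  have hEj : E (β j) = β j ^ (N - 1) * B.det := by
    rw [hEw (β j) (hβne0 j hjS)]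
    congr 1
    have hcol : (fun i : Fin N => (β j) ^ (-lam ((i : ℕ) + 1))) = fun i : Fin N => B i jI := by
      funext i
      rw [hB]
      simp only [Matrix.of_apply, hjI]
      exact (inv_zpow' (β j) _).symm
    rw [hcol, Matrix.updateCol_eq_self]
  -- differentiability
  have hEdiff : Differentiable ℂ E := by
    have hEeq : E = fun z => ∑ σ : Equiv.Perm (Fin N),
        ((Equiv.Perm.sign σ : ℤ) : ℂ) *
          ∏ i, (B.updateCol jI fun i' => z ^ n i') (σ i) i := by
      funext z
      exact Matrix.det_apply' _
    rw [hEeq]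
    apply Differentiable.fun_sum
    intro σ _
    apply Differentiable.const_mul
    apply Differentiable.fun_finset_prod
    intro i _
    by_cases h : i = jI
    · subst h
      simp only [Matrix.updateCol_self]
      exact differentiable_pow _
    · simp only [Matrix.updateCol_ne h]
      exact differentiable_const _
  set A : ℂ → ℂ := fun z => ∏ l ∈ Finset.Icc (s₂ + 1) N, (1 - α l * z)⁻¹ with hA
  have hAne : ∀ z : ℂ, ‖z‖ ≤ 1 → ∀ l, l ∈ Finset.Icc (s₂ + 1) N → 1 - α l * z ≠ 0 := by
    intro z hz l hl
    rw [Finset.mem_Icc] at hl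
    have hlt : ‖α l * z‖ < 1 := by
      rw [norm_mul]
      calc ‖α l‖ * ‖z‖ ≤ ‖α l‖ * 1 :=
            mul_le_mul_of_nonneg_left hz (norm_nonneg _)
        _ = ‖α l‖ := mul_one _
        _ < 1 := hα l (by omega) hl.2
    intro h
    rw [sub_eq_zero] at h
    rw [← h] at hlt
    simp at hlt
  have hAdiff : DifferentiableOn ℂ A (Metric.closedBall (0 : ℂ) 1) := by
    apply DifferentiableOn.fun_finset_prod
    intro l hl
    apply DifferentiableOn.inv
    · exact (differentiable_const (1 : ℂ)).differentiableOn.sub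
        (((differentiable_id.const_mul (α l))).differentiableOn)
    · intro z hz
      exact hAne z (by simpa using Metric.mem_closedBall.1 hz) l hl
  set g : ℂ → ℂ := fun z => E z * A z * z ^ x₂ with hg
  have hgdiff : DifferentiableOn ℂ g (Metric.closedBall (0 : ℂ) 1) :=
    ((hEdiff.differentiableOn.mul hAdiff).mul (differentiable_pow x₂).differentiableOn)
  set c : ℕ → ℂ := fun t => ∏ r ∈ (Finset.Icc 1 N).erase t, (β t - β r)⁻¹ with hc
  have hzbS : ∀ z : ℂ, ‖z‖ = 1 → ∀ t ∈ Finset.Icc 1 N, z ≠ β t := by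
    intro z habs t ht h
    have := hβlt t ht
    rw [← h, habs] at this
    exact lt_irrefl 1 this
  have hEqOn : Set.EqOn
      (fun z => hdetSub N lam (fun t => (β t)⁻¹) j z⁻¹ *
          (∏ l ∈ Finset.Icc (s₂ + 1) N, (1 - α l * z)⁻¹) *
          (∏ t ∈ Finset.Icc 1 N, (1 - β t / z)⁻¹) * z ^ ((x₂ : ℤ) - 1))
      (fun z => ∑ t ∈ Finset.Icc 1 N, c t * ((z - β t)⁻¹ * g z)) (Metric.sphere (0 : ℂ) 1) := by
    intro z hz
    have habs : ‖z‖ = 1 := by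
      simpa using mem_sphere_zero_iff_norm.1 hz
    have hz0 : z ≠ 0 := by intro h; rw [h] at habs; simp at habs
    have hzb : ∀ t ∈ Finset.Icc 1 N, z ≠ β t := hzbS z habs
    have hprod : (∏ t ∈ Finset.Icc 1 N, (1 - β t / z)⁻¹)
        = z ^ N * ∏ t ∈ Finset.Icc 1 N, (z - β t)⁻¹ := by
      have heach : ∀ t ∈ Finset.Icc 1 N, (1 - β t / z)⁻¹ = z * (z - β t)⁻¹ := by
        intro t ht
        have h1 : 1 - β t / z = (z - β t) / z := by field_simp
        rw [h1, inv_div, div_eq_mul_inv]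
      rw [Finset.prod_congr rfl heach, Finset.prod_mul_distrib, Finset.prod_const, hcard]
    have hpf := pfrac β (Finset.Icc 1 N) (fun a ha b hb hab => hdist a b ((hmemS a).1 ha).1 ((hmemS a).1 ha).2
      ((hmemS b).1 hb).1 ((hmemS b).1 hb).2 hab) ⟨j, hjS⟩ z hzb
    simp only
    rw [hsubE z hz0, hprod, hpf]
    simp only [Finset.mul_sum, Finset.sum_mul]
    refine Finset.sum_congr rfl fun t ht => ?_
    have hzp : z ^ ((1 : ℤ) - N) * z ^ (N : ℕ) * z ^ ((x₂ : ℤ) - 1) = z ^ (x₂ : ℕ) := by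
      rw [← zpow_natCast z N, ← zpow_natCast z x₂, ← zpow_add₀ hz0, ← zpow_add₀ hz0]
      congr 1
      ring
    simp only [hg, hA]
    linear_combination (E z * (∏ l ∈ Finset.Icc (s₂ + 1) N, (1 - α l * z)⁻¹) *
      ((z - β t)⁻¹ * c t)) * hzp
  have hint : ∀ t ∈ Finset.Icc 1 N, CircleIntegrable (fun z => c t * ((z - β t)⁻¹ * g z)) 0 1 := by
    intro t ht
    apply ContinuousOn.circleIntegrable zero_le_one
    apply ContinuousOn.mul continuousOn_const
    apply ContinuousOn.mul
    · apply ContinuousOn.inv₀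
      · exact (continuous_id.sub continuous_const).continuousOn
      · intro z hz
        refine sub_ne_zero.2 (hzbS z ?_ t ht)
        simpa using mem_sphere_zero_iff_norm.1 hz
    · exact (hgdiff.continuousOn).mono Metric.sphere_subset_closedBall
  have hball : ∀ t ∈ Finset.Icc 1 N, β t ∈ Metric.ball (0 : ℂ) 1 := fun t ht =>
    Metric.mem_ball.2 (by simpa [Complex.dist_eq] using hβlt t ht)
  have hIntEq : (∮ z in C(0, 1),
        hdetSub N lam (fun t => (β t)⁻¹) j z⁻¹ *
          (∏ l ∈ Finset.Icc (s₂ + 1) N, (1 - α l * z)⁻¹) *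
          (∏ t ∈ Finset.Icc 1 N, (1 - β t / z)⁻¹) * z ^ ((x₂ : ℤ) - 1))
      = ∑ t ∈ Finset.Icc 1 N, c t * (2 * (Real.pi : ℂ) * Complex.I * g (β t)) := by
    rw [circleIntegral.integral_congr zero_le_one hEqOn, circleIntegral_finset_sum (Finset.Icc 1 N) _ 0 1 hint]
    refine Finset.sum_congr rfl fun t ht => ?_
    rw [circleIntegral.integral_const_mul]
    congr 1
    have := hgdiff.circleIntegral_sub_inv_smul (hball t ht)
    simpa [smul_eq_mul] using this
  have hsum : ∑ t ∈ Finset.Icc 1 N, c t * (2 * (Real.pi : ℂ) * Complex.I * g (β t))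
      = c j * (2 * (Real.pi : ℂ) * Complex.I * g (β j)) := by
    refine Finset.sum_eq_single_of_mem j hjS fun t ht htj => ?_
    have : g (β t) = 0 := by
      rw [hg]
      simp only
      rw [hEt0 t ht htj, zero_mul, zero_mul]
    rw [this, mul_zero, mul_zero]
  -- final algebra
  rw [hIntEq, hsum]
  have hβj0 : β j ≠ 0 := hβne0 j hjS
  have h2pi : (2 * (Real.pi : ℂ) * Complex.I) ≠ 0 := by
    simp [Real.pi_ne_zero, Complex.I_ne_zero]
  have hgj : g (β j) = β j ^ (N - 1) * B.det *
      (∏ l ∈ Finset.Icc (s₂ + 1) N, (1 - α l * β j))⁻¹ * β j ^ x₂ := by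
    simp only [hg, hA]
    rw [hEj, Finset.prod_inv_distrib]
  have hαβ : ∀ l ∈ Finset.Icc 1 N, 1 - α l * β j ≠ 0 := by
    intro l hl
    rw [Finset.mem_Icc] at hl
    have hlt : ‖α l * β j‖ < 1 := by
      rw [norm_mul]
      calc ‖α l‖ * ‖β j‖
          ≤ 1 * ‖β j‖ :=
            mul_le_mul_of_nonneg_right (le_of_lt (hα l hl.1 hl.2)) (norm_nonneg _)
        _ = ‖β j‖ := one_mul _
        _ < 1 := hβlt j hjS
    intro h
    rw [sub_eq_zero] at h
    rw [← h] at hlt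
    simp at hlt
  have e1 : Finset.Icc 1 N = Finset.Ioc 0 N := by ext x; simp; omega
  have e2 : Finset.Icc 1 s₂ = Finset.Ioc 0 s₂ := by ext x; simp; omega
  have e3 : Finset.Icc (s₂ + 1) N = Finset.Ioc s₂ N := by ext x; simp
  have hQsplit : (∏ t ∈ Finset.Icc 1 N, (1 - α t * β j))
      = (∏ i ∈ Finset.Icc 1 s₂, (1 - α i * β j)) *
        ∏ l ∈ Finset.Icc (s₂ + 1) N, (1 - α l * β j) := by
    rw [e1, e2, e3]
    exact (Finset.prod_Ioc_consecutive _ (Nat.zero_le s₂) hs₂).symm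
  have hcarde : ((Finset.Icc 1 N).erase j).card = N - 1 := by
    rw [Finset.card_erase_of_mem hjS, hcard]
  have hQ3 : (∏ s ∈ (Finset.Icc 1 N).erase j, (1 - β s / β j))
      = (∏ s ∈ (Finset.Icc 1 N).erase j, (β j - β s)) * ((β j)⁻¹) ^ (N - 1) := by
    rw [← hcarde, ← Finset.prod_const, ← Finset.prod_mul_distrib]
    refine Finset.prod_congr rfl fun s hs => ?_
    field_simp
  have hQ3ne : ∀ s ∈ (Finset.Icc 1 N).erase j, β j - β s ≠ 0 := by
    intro s hs
    rw [Finset.mem_erase, Finset.mem_Icc] at hs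
    exact sub_ne_zero.2 (hdist j s hj hjN hs.2.1 hs.2.2 (fun h => hs.1 h.symm))
  have hPne : (∏ r ∈ (Finset.Icc 1 N).erase j, (β j - β r)) ≠ 0 :=
    Finset.prod_ne_zero_iff.2 hQ3ne
  have hcj : c j = (∏ r ∈ (Finset.Icc 1 N).erase j, (β j - β r))⁻¹ := by
    rw [hc]
    exact Finset.prod_inv_distrib _
  have hQ1ne : (∏ i ∈ Finset.Icc 1 s₂, (1 - α i * β j)) ≠ 0 :=
    Finset.prod_ne_zero_iff.2 fun i hi => hαβ i (by rw [Finset.mem_Icc] at hi ⊢; omega)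
  have hQ2ne : (∏ l ∈ Finset.Icc (s₂ + 1) N, (1 - α l * β j)) ≠ 0 :=
    Finset.prod_ne_zero_iff.2 fun l hl => hαβ l (by rw [Finset.mem_Icc] at hl ⊢; omega)
  rw [hgj, hcj, hdetB, hQsplit, hQ3]
  field_simp
  have hb : β j ^ (N - 1) * (β j)⁻¹ ^ (N - 1) = 1 := by
    rw [← mul_pow, mul_inv_cancel₀ hβj0, one_pow]
  have hq : (∏ x ∈ Finset.Icc 1 s₂, (1 - β j * α x)) ≠ 0 :=
    Finset.prod_ne_zero_iff.2 fun i hi => by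
      rw [mul_comm]; exact hαβ i (by rw [Finset.mem_Icc] at hi ⊢; omega)
  rw [mul_div_mul_right _ _ hq, one_div]
  linear_combination (B.det / ∏ x ∈ Finset.Icc (s₂ + 1) N, (1 - β j * α x)) * hb
end

section
/- Let N ≥ 1 and k ≥ 1 be integers, let β_1,…,β_N be nonzero complex numbers whose k-th powers are pairwise distinct, let j ∈ {1,…,N}, let s_2 ∈ ℕ and α_1,…,α_{s_2} ∈ ℂ, let x_2 ∈ ℕ, and let z ∈ ℂ with z^k ≠ β_j^k. Choose ε > 0 such that the closed disk {|w − β_j| ≤ ε} contains no solution of w^k = β_ℓ^k other than w = β_j (for any ℓ ∈ {1,…,N}) and no solution of w^k = z^k. Then (k/2πi) ∮_{|w−β_j|=ε} ∏_{r=1}^{s_2}(1−α_r w) · w^{x_2+k−1} / [∏_{ℓ=1}^{N}(w^k − β_ℓ^k) · (z^k − w^k)] dw = ∏_{r=1}^{s_2}(1−α_r β_j) · β_j^{x_2} / [∏_{ℓ=1, ℓ≠j}^{N}(β_j^k − β_ℓ^k) · (z^k − β_j^k)]. -/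
open Finset Metric

/-- the residue computation (3.23) of the paper.  The integral is over the
positively oriented circle `|w − β_j| = ε`. -/
theorem residue_computation (N k : ℕ) (hN : 1 ≤ N) (hk : 1 ≤ k) (β : ℕ → ℂ)
    (hβ : ∀ i, 1 ≤ i → i ≤ N → β i ≠ 0)
    (hdist : ∀ i j, 1 ≤ i → i ≤ N → 1 ≤ j → j ≤ N → i ≠ j → β i ^ k ≠ β j ^ k)
    (j : ℕ) (hj : 1 ≤ j) (hjN : j ≤ N) (s₂ : ℕ) (α : ℕ → ℂ) (x₂ : ℕ) (z : ℂ)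
    (hz : z ^ k ≠ β j ^ k) (ε : ℝ) (hε : 0 < ε)
    (hεdisk : ∀ w : ℂ, ‖w - β j‖ ≤ ε →
      (∀ l, 1 ≤ l → l ≤ N → w ^ k = β l ^ k → w = β j) ∧ w ^ k ≠ z ^ k) :
    ((k : ℂ) / (2 * (Real.pi : ℂ) * Complex.I)) *
        (∮ w in C(β j, ε),
          (∏ i ∈ Finset.Icc 1 s₂, (1 - α i * w)) * w ^ (x₂ + k - 1) /
            ((∏ l ∈ Finset.Icc 1 N, (w ^ k - β l ^ k)) * (z ^ k - w ^ k)))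
      = (∏ i ∈ Finset.Icc 1 s₂, (1 - α i * β j)) * β j ^ x₂ /
          ((∏ l ∈ (Finset.Icc 1 N).erase j, (β j ^ k - β l ^ k)) * (z ^ k - β j ^ k)) := by
  have hβj : β j ≠ 0 := hβ j hj hjN
  have hjmem : j ∈ Finset.Icc 1 N := Finset.mem_Icc.mpr ⟨hj, hjN⟩
  -- the quotient factor of w^k - β_j^k
  set h : ℂ → ℂ := fun w => ∑ i ∈ Finset.range k, w ^ i * β j ^ (k - 1 - i) with hh
  have hfac : ∀ w : ℂ, h w * (w - β j) = w ^ k - β j ^ k := fun w => geom_sum₂_mul w (β j) k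
  have hhβ : h (β j) = (k : ℂ) * β j ^ (k - 1) := by
    have : ∀ i ∈ Finset.range k, β j ^ i * β j ^ (k - 1 - i) = β j ^ (k - 1) := by
      intro i hi
      rw [← pow_add]
      congr 1
      have := Finset.mem_range.mp hi
      omega
    rw [hh]
    simp only [Finset.sum_congr rfl this, Finset.sum_const, Finset.card_range, nsmul_eq_mul]
  -- denominator of g
  set D : ℂ → ℂ := fun w =>
    h w * (∏ l ∈ (Finset.Icc 1 N).erase j, (w ^ k - β l ^ k)) * (z ^ k - w ^ k) with hD
  have hDne : ∀ w : ℂ, ‖w - β j‖ ≤ ε → D w ≠ 0 := by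
    intro w hw
    obtain ⟨h1, h2⟩ := hεdisk w hw
    have hhw : h w ≠ 0 := by
      intro h0
      have : w ^ k = β j ^ k := by
        have := hfac w
        rw [h0, zero_mul] at this
        linear_combination -this
      have hwβ : w = β j := h1 j hj hjN this
      rw [hwβ, hhβ] at h0
      exact mul_ne_zero (Nat.cast_ne_zero.mpr (by omega)) (pow_ne_zero _ hβj) h0
    have hprod : (∏ l ∈ (Finset.Icc 1 N).erase j, (w ^ k - β l ^ k)) ≠ 0 := by
      apply Finset.prod_ne_zero_iff.mpr
      intro l hl
      have hlj := Finset.ne_of_mem_erase hl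
      have hlI := Finset.mem_Icc.mp (Finset.mem_of_mem_erase hl)
      intro h0
      have heq : w ^ k = β l ^ k := by linear_combination h0
      have hwβ : w = β j := h1 l hlI.1 hlI.2 heq
      rw [hwβ] at heq
      exact hdist j l hj hjN hlI.1 hlI.2 (Ne.symm hlj) heq
    exact mul_ne_zero (mul_ne_zero hhw hprod) (fun h0 => h2 (by linear_combination -h0))
  -- the holomorphic part
  set g : ℂ → ℂ := fun w =>
    (∏ i ∈ Finset.Icc 1 s₂, (1 - α i * w)) * w ^ (x₂ + k - 1) / D w with hg
  -- integrand equality on the circle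
  have hcirc : (∮ w in C(β j, ε),
      (∏ i ∈ Finset.Icc 1 s₂, (1 - α i * w)) * w ^ (x₂ + k - 1) /
        ((∏ l ∈ Finset.Icc 1 N, (w ^ k - β l ^ k)) * (z ^ k - w ^ k)))
      = ∮ w in C(β j, ε), (w - β j)⁻¹ • g w := by
    apply circleIntegral.integral_congr hε.le
    intro w hw
    have hwε : ‖w - β j‖ = ε := by simpa [Complex.dist_eq] using hw
    have hwne : w - β j ≠ 0 := by
      intro h0; rw [h0] at hwε; simp at hwε; exact hε.ne' hwε.symm
    have hsplit : (∏ l ∈ Finset.Icc 1 N, (w ^ k - β l ^ k))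
        = (w ^ k - β j ^ k) * ∏ l ∈ (Finset.Icc 1 N).erase j, (w ^ k - β l ^ k) :=
      (Finset.mul_prod_erase _ _ hjmem).symm
    have hDw := hDne w hwε.le
    simp only [hg, hD, smul_eq_mul]
    rw [hsplit, ← hfac w, eq_comm, inv_mul_eq_div, div_div]
    congr 1
    ring
  rw [hcirc]
  have hgd : DifferentiableOn ℂ g (closedBall (β j) ε) := by
    apply DifferentiableOn.div
    · apply DifferentiableOn.mul
      · exact (Differentiable.fun_finsetProd (fun i _ => by fun_prop)).differentiableOn
      · fun_prop
    · apply DifferentiableOn.mul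
      · apply DifferentiableOn.mul
        · exact (Differentiable.fun_sum (fun i _ => by fun_prop)).differentiableOn
        · exact (Differentiable.fun_finsetProd (fun i _ => by fun_prop)).differentiableOn
      · fun_prop
    · intro x hx
      exact hDne x (by simpa [Complex.dist_eq] using (mem_closedBall.mp hx))
  rw [hgd.circleIntegral_sub_inv_smul (mem_ball_self hε)]
  -- final algebra
  have hDβ : D (β j) = (k : ℂ) * β j ^ (k - 1) *
      (∏ l ∈ (Finset.Icc 1 N).erase j, (β j ^ k - β l ^ k)) * (z ^ k - β j ^ k) := by
    simp only [hD, hhβ]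
  have hprodβ : (∏ l ∈ (Finset.Icc 1 N).erase j, (β j ^ k - β l ^ k)) ≠ 0 := by
    apply Finset.prod_ne_zero_iff.mpr
    intro l hl
    have hlj := Finset.ne_of_mem_erase hl
    have hlI := Finset.mem_Icc.mp (Finset.mem_of_mem_erase hl)
    exact sub_ne_zero_of_ne (hdist j l hj hjN hlI.1 hlI.2 (Ne.symm hlj))
  have hzβ : z ^ k - β j ^ k ≠ 0 := sub_ne_zero_of_ne hz
  have hkc : (k : ℂ) ≠ 0 := Nat.cast_ne_zero.mpr (by omega)
  have hβpow : β j ^ (x₂ + k - 1) = β j ^ x₂ * β j ^ (k - 1) := by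
    rw [← pow_add]; congr 1; omega
  have h2πI : (2 * (Real.pi : ℂ) * Complex.I) ≠ 0 := by
    simp [Real.pi_ne_zero, Complex.I_ne_zero, Complex.ext_iff]
  rw [smul_eq_mul, ← mul_assoc, div_mul_cancel₀ _ h2πI]
  simp only [hg]
  rw [hDβ, hβpow]
  have hβp : β j ^ (k-1) ≠ 0 := pow_ne_zero _ hβj
  field_simp
  ring_nf
  exact Finset.prod_congr rfl (fun x _ => by ring)
end

section
/- Fix an integer k ≥ 2 and γ ∈ (0,1), and set ω_k = e^{2πi/k}. Then lim_{S→∞} Σ_{j=1}^{k−1} ∫_{−π}^{π} |(1 − γe^{it/k}) / (1 − ω_k^j γ e^{it/k})|^S dt = 0, where S ranges over the positive integers. -/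
open Real

lemma normSq_one_sub (γ θ : ℝ) :
    Complex.normSq (1 - (γ:ℂ) * Complex.exp ((θ:ℝ) * Complex.I)) =
      1 - 2*γ*Real.cos θ + γ^2 := by
  rw [show ((θ:ℝ):ℂ) * Complex.I = (θ:ℂ) * Complex.I from rfl, Complex.exp_mul_I]
  simp [Complex.normSq_apply, ← Complex.ofReal_cos, ← Complex.ofReal_sin]
  nlinarith [Real.sin_sq_add_cos_sq θ]

lemma omega_pow_mul (k : ℕ) (γ : ℝ) (j : ℕ) (θ : ℝ) :
    omegaK k ^ j * (γ:ℂ) * Complex.exp ((θ:ℝ) * Complex.I)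
      = (γ:ℂ) * Complex.exp (((θ + 2*Real.pi*j/k : ℝ)) * Complex.I) := by
  rw [omegaK, ← Complex.exp_nat_mul, mul_comm _ ((γ:ℂ)), mul_assoc, ← Complex.exp_add]
  congr 2
  push_cast
  ring

lemma den_ne_zero (k : ℕ) (γ : ℝ) (hγ : γ ∈ Set.Ioo (0:ℝ) 1) (j : ℕ) (θ : ℝ) :
    1 - omegaK k ^ j * (γ:ℂ) * Complex.exp ((θ:ℝ) * Complex.I) ≠ 0 := by
  rw [omega_pow_mul, sub_ne_zero]
  intro h
  have : ‖(γ:ℂ) * Complex.exp (((θ + 2*Real.pi*j/k : ℝ)) * Complex.I)‖ = 1 := by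
    rw [← h]; simp
  rw [norm_mul, Complex.norm_exp] at this
  simp at this
  rw [abs_of_pos hγ.1] at this
  linarith [hγ.2]

lemma cos_lt (k : ℕ) (hk : 2 ≤ k) (j : ℕ) (hj1 : 1 ≤ j) (hj2 : j ≤ k - 1)
    (t : ℝ) (ht : t ∈ Set.Ioo (-π) π) :
    Real.cos (t/k + 2*π*j/k) < Real.cos (t/k) := by
  have hkpos : (0:ℝ) < k := by positivity
  have hk2 : (2:ℝ) ≤ k := by exact_mod_cast hk
  have hπ := Real.pi_pos
  obtain ⟨ht1, ht2⟩ := ht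
  have hj1' : (1:ℝ) ≤ j := by exact_mod_cast hj1
  have hj2' : (j:ℝ) ≤ (k:ℝ) - 1 := by
    have h := hj2
    have : (j:ℝ) ≤ ((k-1 : ℕ) : ℝ) := by exact_mod_cast h
    rwa [Nat.cast_sub (by omega), Nat.cast_one] at this
  have hθu : t/k < π/k := by gcongr
  have hθl : -(π/k) < t/k := by rw [← neg_div]; gcongr
  have hθ : |t/k| < π/k := abs_lt.mpr ⟨hθl, hθu⟩
  have hπk : π/k ≤ π := by rw [div_le_iff₀ hkpos]; nlinarith
  have h1 : Real.cos (π/k) < Real.cos (t/k) := by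
    rw [← Real.cos_abs (t/k)]
    exact Real.cos_lt_cos_of_nonneg_of_le_pi (abs_nonneg _) hπk hθ
  set φ := t/k + 2*π*j/k with hφ
  have hjk : 2*π*(j:ℝ)/k ≤ 2*π*((k:ℝ)-1)/k := by gcongr
  have hjk1 : 2*π*(1:ℝ)/k ≤ 2*π*(j:ℝ)/k := by gcongr
  have hlow : π/k ≤ φ := by
    have : 2*π*((k:ℝ)-1)/k = 2*π - 2*π/k := by field_simp
    have h2 : 2*π*(1:ℝ)/k = 2*π/k := by ring
    rw [hφ]; rw [h2] at hjk1
    have : π/k + π/k = 2*π/k := by ring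
    linarith
  have hhigh : φ ≤ 2*π - π/k := by
    have he : 2*π*((k:ℝ)-1)/k = 2*π - 2*π/k := by field_simp
    rw [he] at hjk
    have : π/k + π/k = 2*π/k := by ring
    rw [hφ]; linarith
  have h2 : Real.cos φ ≤ Real.cos (π/k) := by
    rcases le_or_gt φ π with hc | hc
    · exact Real.cos_le_cos_of_nonneg_of_le_pi (by positivity) hc hlow
    · have : Real.cos φ = Real.cos (2*π - φ) := by
        rw [Real.cos_two_pi_sub]
      rw [this]
      exact Real.cos_le_cos_of_nonneg_of_le_pi (by positivity) (by linarith) (by linarith)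
  linarith

lemma ratio_lt_one (k : ℕ) (hk : 2 ≤ k) (γ : ℝ) (hγ : γ ∈ Set.Ioo (0:ℝ) 1)
    (j : ℕ) (hj1 : 1 ≤ j) (hj2 : j ≤ k - 1) (t : ℝ) (ht : t ∈ Set.Ioo (-π) π) :
    ‖(1 - (γ : ℂ) * Complex.exp ((t / k : ℝ) * Complex.I)) /
      (1 - (omegaK k) ^ j * (γ : ℂ) * Complex.exp ((t / k : ℝ) * Complex.I))‖ < 1 := by
  rw [norm_div, div_lt_one]
  · apply lt_of_pow_lt_pow_left₀ 2 (norm_nonneg _)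
    rw [Complex.sq_norm, Complex.sq_norm, omega_pow_mul, normSq_one_sub, normSq_one_sub]
    have := cos_lt k hk j hj1 hj2 t ht
    nlinarith [hγ.1]
  · exact (norm_pos_iff.mpr (den_ne_zero k γ hγ j (t/k)))

/-- for a fixed integer `k ≥ 2` and `γ ∈ (0,1)`,
`lim_{S→∞} Σ_{j=1}^{k−1} ∫_{−π}^{π} |(1 − γe^{it/k})/(1 − ω_k^j γ e^{it/k})|^S dt = 0`. -/
theorem sum_integral_ratio_tendsto_zero (k : ℕ) (hk : 2 ≤ k) (γ : ℝ)
    (hγ : γ ∈ Set.Ioo (0 : ℝ) 1) :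
    Filter.Tendsto (fun S : ℕ =>
        ∑ j ∈ Finset.Icc 1 (k - 1), ∫ t in (-Real.pi)..Real.pi,
          (‖(1 - (γ : ℂ) * Complex.exp ((t / k : ℝ) * Complex.I)) /
              (1 - (omegaK k) ^ j * (γ : ℂ) * Complex.exp ((t / k : ℝ) * Complex.I))‖) ^ S)
      Filter.atTop (nhds 0) := by
  have hπ := Real.pi_pos
  set r : ℕ → ℝ → ℝ := fun j t =>
    ‖(1 - (γ : ℂ) * Complex.exp ((t / k : ℝ) * Complex.I)) /
      (1 - (omegaK k) ^ j * (γ : ℂ) * Complex.exp ((t / k : ℝ) * Complex.I))‖ with hr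
  have hae : ∀ᵐ x : ℝ, x ≠ π := by
    rw [MeasureTheory.ae_iff]
    simp
  have hIoo : ∀ x : ℝ, x ≠ π → x ∈ Set.uIoc (-π) π → x ∈ Set.Ioo (-π) π := by
    intro x hne hx
    rw [Set.uIoc_of_le (by linarith)] at hx
    exact ⟨hx.1, lt_of_le_of_ne hx.2 hne⟩
  have key : ∀ j ∈ Finset.Icc 1 (k-1),
      Filter.Tendsto (fun S : ℕ => ∫ t in (-π)..π, (r j t) ^ S)
        Filter.atTop (nhds 0) := by
    intro j hj
    rw [Finset.mem_Icc] at hj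
    have hcont : Continuous (r j) := by
      apply continuous_norm.comp
      apply Continuous.div
      · fun_prop
      · fun_prop
      · intro t; exact den_ne_zero k γ hγ j (t/k)
    have H := intervalIntegral.tendsto_integral_filter_of_dominated_convergence
      (μ := MeasureTheory.volume) (a := -π) (b := π) (F := fun S t => (r j t) ^ S)
      (f := fun _ => (0:ℝ)) (l := Filter.atTop) (fun _ => (1:ℝ))
      (Filter.Eventually.of_forall fun S => ((hcont.pow S).aestronglyMeasurable))
      (Filter.Eventually.of_forall fun S => by
        filter_upwards [hae] with x hx hmem
        have hlt := ratio_lt_one k hk γ hγ j hj.1 hj.2 x (hIoo x hx hmem)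
        rw [Real.norm_eq_abs, abs_of_nonneg (by positivity)]
        exact pow_le_one₀ (norm_nonneg _) hlt.le)
      intervalIntegrable_const
      (by
        filter_upwards [hae] with x hx hmem
        have hlt := ratio_lt_one k hk γ hγ j hj.1 hj.2 x (hIoo x hx hmem)
        exact tendsto_pow_atTop_nhds_zero_of_lt_one (norm_nonneg _) hlt)
    simpa using H
  have h0 : (0:ℝ) = ∑ _j ∈ Finset.Icc 1 (k-1), (0:ℝ) := by simp
  rw [h0]
  exact tendsto_finset_sum _ key
end
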